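/- arXiv:1307.6200 — 4 statements merged into one kernel-verified Lean document; each statement's English description precedes it below -/
import Mathlib

section
/- There exists a sequence of polynomials P_k ∈ ℤ[x] of exact degrees n_k → ∞, all of whose complex zeros are simple and lie in the real segment [−1,1], whose leading coefficients a_{n_k} satisfy liminf_{k→∞} |a_{n_k}|^{1/n_k} ≤ 1.54170092. -/
set_option maxRecDepth 8000

open Filter Polynomial

noncomputable section
namespace Gor

/-! ### Integer polynomials -/

def w : Polynomial ℤ := X^2 - X

def F : ℕ → Polynomial ℤ × Polynomial ℤ
  | 0 => (2*X - 1, 1)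
  | n+1 => ((F n).1^2 + w * (F n).2^2, (F n).2 * (F n).1)

def G (n : ℕ) : Polynomial ℤ := (F n).1
def H (n : ℕ) : Polynomial ℤ := (F n).2

lemma G_zero : G 0 = 2*X - 1 := rfl
lemma H_zero : H 0 = 1 := rfl
lemma G_succ (n : ℕ) : G (n+1) = G n ^2 + w * H n ^2 := rfl
lemma H_succ (n : ℕ) : H (n+1) = H n * G n := rfl

def J : ℕ → Polynomial ℤ
  | 0 => 1
  | n+1 => J n * G (n+1)

lemma H_eq (n : ℕ) : H (n+1) = G 0 * J n := by
  induction n with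
  | zero => simp [H_succ, H_zero, J, mul_comm]
  | succ n ih => rw [H_succ, ih, J]; ring

/-! ### Real polynomials -/

def rmap : Polynomial ℤ →+* Polynomial ℝ := Polynomial.mapRingHom (Int.castRingHom ℝ)

def g (n : ℕ) : Polynomial ℝ := rmap (G n)
def h (n : ℕ) : Polynomial ℝ := rmap (H n)
def j (n : ℕ) : Polynomial ℝ := rmap (J n)
def pR : Polynomial ℝ := X - X^2
def qR : Polynomial ℝ := 3*X^2 - 3*X + 1
def wR : Polynomial ℝ := X^2 - X

lemma rmap_w : rmap w = wR := by
  simp [w, wR, rmap]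

lemma g_zero : g 0 = 2*X - 1 := by simp [g, G_zero, rmap]
lemma g_succ (n : ℕ) : g (n+1) = g n ^2 + wR * h n ^2 := by
  simp [g, h, G_succ, rmap_w.symm, map_add, map_mul, map_pow]
lemma h_succ (n : ℕ) : h (n+1) = h n * g n := by simp [h, g, H_succ, map_mul]
lemma h_zero : h 0 = 1 := by simp [h, H_zero]
lemma j_zero : j 0 = 1 := by simp [j, J]
lemma j_succ (n : ℕ) : j (n+1) = j n * g (n+1) := by simp [j, g, J, map_mul]
lemma h_eq (n : ℕ) : h (n+1) = g 0 * j n := by rw [h, H_eq, map_mul]; rfl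

/-! ### Rational function field -/

abbrev FR := RatFunc ℝ
def ι : Polynomial ℝ →+* FR := (algebraMap (Polynomial ℝ) FR : Polynomial ℝ →+* FR)

lemma ι_inj : Function.Injective ι := RatFunc.algebraMap_injective ℝ

lemma qR_ne : qR ≠ 0 := by
  intro h
  have := congrArg (Polynomial.eval 0) h
  simp [qR] at this

lemma ιq_ne : ι qR ≠ 0 := fun h => qR_ne (ι_inj (by simpa using h))

def V : FR := ι pR / ι qR

def Φ : Polynomial ℝ →+* FR := eval₂RingHom (ι.comp (C : ℝ →+* Polynomial ℝ)) V

lemma Phi_X : Φ X = V := eval₂_X _ _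
lemma Phi_C (a : ℝ) : Φ (C a) = ι (C a) := eval₂_C _ _

lemma V_mul : V * ι qR = ι pR := div_mul_cancel₀ _ ιq_ne

lemma key_w : Φ wR * (ι qR)^2 = ι (wR * (g 0)^2) := by
  have h0 : Φ wR = V^2 - V := by simp [wR, map_sub, map_pow, Phi_X]
  rw [h0, g_zero]
  have h1 : (V^2 - V) * (ι qR)^2 = (V * ι qR)^2 - (V * ι qR) * ι qR := by ring
  rw [h1, V_mul, ← map_pow, ← map_mul, ← map_sub]
  congr 1
  simp only [pR, qR, wR]
  ring

lemma base_S : Φ (g 0) * ι qR = ι (C (-1) * g 1) := by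
  have h0 : Φ (g 0) = 2 * V - 1 := by
    rw [g_zero]; push_cast [map_sub, map_mul, map_one, map_ofNat, Phi_X]; ring
  rw [h0]
  have h1 : (2 * V - 1) * ι qR = 2 * (V * ι qR) - ι qR := by ring
  rw [h1, V_mul, ← map_ofNat ι 2, ← map_mul, ← map_sub]
  congr 1
  have hg1 : g 1 = g 0 ^2 + wR * h 0 ^2 := g_succ 0
  rw [hg1, g_zero, h_zero]
  simp only [pR, qR, wR, map_neg, map_one]
  ring

lemma ST (n : ℕ) :
    (∃ ε : ℝ, ε^2 = 1 ∧ Φ (g n) * ι qR ^ (2^n) = ι (C ε * g (n+1))) ∧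
    (∃ δ : ℝ, δ^2 = 1 ∧ Φ (h n) * ι qR ^ (2^n - 1) = ι (C δ * j n)) := by
  induction n with
  | zero =>
    constructor
    · exact ⟨-1, by norm_num, by simpa using base_S⟩
    · exact ⟨1, by norm_num, by simp [h_zero, j_zero]⟩
  | succ n ih =>
    obtain ⟨⟨ε, hε, hS⟩, ⟨δ, hδ, hT⟩⟩ := ih
    have hone : (1:ℕ) ≤ 2^n := Nat.one_le_two_pow
    have hq1 : ι qR ^ ((2:ℕ)^(n+1)) = (ι qR ^ (2^n))^2 := by
      rw [← pow_mul, pow_succ]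
    have hq2 : ι qR ^ ((2:ℕ)^n) = ι qR * ι qR ^ (2^n - 1) := by
      rw [← pow_succ']; congr 1; omega
    constructor
    · -- S (n+1)
      refine ⟨1, by norm_num, ?_⟩
      have e1 : Φ (g (n+1)) * ι qR ^ (2^(n+1))
          = (Φ (g n) * ι qR ^ (2^n))^2
            + (Φ wR * ι qR^2) * (Φ (h n) * ι qR ^ (2^n - 1))^2 := by
        rw [g_succ, map_add, map_pow, map_mul, map_pow, hq1, hq2]
        ring
      have hCe : (C ε : Polynomial ℝ)^2 = 1 := by rw [← map_pow, hε, map_one]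
      have hCd : (C δ : Polynomial ℝ)^2 = 1 := by rw [← map_pow, hδ, map_one]
      have e3 : (C ε * g (n+1))^2 + (wR * g 0 ^2) * (C δ * j n)^2
          = C 1 * g (n+1+1) := by
        rw [g_succ (n+1), h_eq n, map_one, mul_pow, mul_pow, hCe, hCd]
        ring
      rw [e1, hS, hT, key_w, ← map_pow, ← map_pow, ← map_mul, ← map_add, e3]
    · -- T (n+1)
      refine ⟨δ * ε, by rw [mul_pow, hε, hδ]; norm_num, ?_⟩
      have hq3 : ι qR ^ ((2:ℕ)^(n+1) - 1) = ι qR ^ (2^n - 1) * ι qR ^ (2^n) := by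
        rw [← pow_add]; congr 1; omega
      have e1 : Φ (h (n+1)) * ι qR ^ (2^(n+1) - 1)
          = (Φ (h n) * ι qR ^ (2^n - 1)) * (Φ (g n) * ι qR ^ (2^n)) := by
        rw [h_succ, map_mul, hq3]; ring
      rw [e1, hS, hT, ← map_mul]
      congr 1
      rw [j_succ, map_mul]
      ring

/-! ### Branch roots -/

def sr (r : ℝ) : ℝ := Real.sqrt ((1-r)/(1+3*r))
def bp (r : ℝ) : ℝ := (1 + sr r)/2
def bm (r : ℝ) : ℝ := (1 - sr r)/2

lemma denom_pos {r : ℝ} (h0 : 0 < r) : 0 < 1 + 3*r := by linarith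

lemma sr_sq {r : ℝ} (h0 : 0 < r) (h1 : r < 1) : sr r ^ 2 = (1-r)/(1+3*r) := by
  rw [sr, Real.sq_sqrt]
  exact le_of_lt (div_pos (by linarith) (denom_pos h0))

lemma sr_mem {r : ℝ} (h0 : 0 < r) (h1 : r < 1) : 0 < sr r ∧ sr r < 1 := by
  have hd := denom_pos h0
  have hnn : (0:ℝ) ≤ (1-r)/(1+3*r) := le_of_lt (div_pos (by linarith) hd)
  constructor
  · exact Real.sqrt_pos.2 (div_pos (by linarith) hd)
  · have h2 : sr r^2 < 1 := by rw [sr_sq h0 h1, div_lt_one hd]; linarith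
    have h3 : (0:ℝ) ≤ sr r := Real.sqrt_nonneg _
    nlinarith

lemma bp_mem {r : ℝ} (h0 : 0 < r) (h1 : r < 1) : 0 < bp r ∧ bp r < 1 := by
  obtain ⟨hs0, hs1⟩ := sr_mem h0 h1; constructor <;> rw [bp] <;> linarith

lemma bm_mem {r : ℝ} (h0 : 0 < r) (h1 : r < 1) : 0 < bm r ∧ bm r < 1 := by
  obtain ⟨hs0, hs1⟩ := sr_mem h0 h1; constructor <;> rw [bm] <;> linarith

lemma bp_ne_bm {r : ℝ} (h0 : 0 < r) (h1 : r < 1) : bp r ≠ bm r := by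
  obtain ⟨hs0, _⟩ := sr_mem h0 h1
  rw [bp, bm]; intro h; nlinarith

lemma bp_add_bm (r : ℝ) : bp r + bm r = 1 := by rw [bp, bm]; ring

lemma bp_mul_bm' {r : ℝ} (h0 : 0 < r) (h1 : r < 1) : bp r * bm r * (1+3*r) = r := by
  have h' : sr r^2 * (1+3*r) = 1 - r := by
    rw [sr_sq h0 h1]; field_simp
  rw [bp, bm]; linear_combination (-1/4 : ℝ) * h'

lemma quad_ident {r : ℝ} (h0 : 0 < r) (h1 : r < 1) :
    pR - C r * qR = C (-(1+3*r)) * ((X - C (bp r)) * (X - C (bm r))) := by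
  have hCne : (C (1+3*r) : Polynomial ℝ) ≠ 0 :=
    Polynomial.C_ne_zero.mpr (denom_pos h0).ne'
  apply mul_left_cancel₀ hCne
  have hC13 : (C (1+3*r) : Polynomial ℝ) = 1 + 3 * C r := by
    simp [map_add, map_mul, map_one, map_ofNat]
  have k1 : ((1:Polynomial ℝ) + 3 * C r) * (C (bp r) * C (bm r)) = C r := by
    rw [← hC13, ← map_mul, ← map_mul]
    congr 1
    linear_combination bp_mul_bm' h0 h1
  have e1 : (X - C (bp r)) * (X - C (bm r))
      = X^2 - C (bp r + bm r) * X + C (bp r * bm r) := by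
    rw [map_add, map_mul]; ring
  rw [e1, bp_add_bm, hC13]
  simp only [pR, qR, map_neg, map_add, map_mul, map_one, map_ofNat, hC13]
  linear_combination ((1:Polynomial ℝ) + 3 * C r) * k1

lemma qR_eval_pos (x : ℝ) : 0 < eval x qR := by
  simp only [qR, eval_add, eval_sub, eval_mul, eval_pow, eval_ofNat, eval_X, eval_one]
  nlinarith [sq_nonneg (2*x - 1)]

lemma branch_root {r : ℝ} (h0 : 0 < r) (h1 : r < 1) {x : ℝ}
    (hx : x = bp r ∨ x = bm r) : eval x pR = r * eval x qR := by
  have := congrArg (eval x) (quad_ident h0 h1)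
  simp only [eval_sub, eval_mul, eval_C, eval_X] at this
  rcases hx with h | h <;> subst h <;> nlinarith [this]

lemma branch_inj {r r' : ℝ} (h0 : 0 < r) (h1 : r < 1) (h0' : 0 < r') (h1' : r' < 1)
    {x : ℝ} (hx : x = bp r ∨ x = bm r) (hx' : x = bp r' ∨ x = bm r') : r = r' := by
  have e1 := branch_root h0 h1 hx
  have e2 := branch_root h0' h1' hx'
  have := qR_eval_pos x
  have : (r - r') * eval x qR = 0 := by linarith
  rcases mul_eq_zero.1 this with h | h
  · linarith
  · exact absurd h (qR_eval_pos x).ne'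

/-! ### Main factorization -/

lemma Main (n : ℕ) : ∃ (S : Finset ℝ) (a : ℝ), a ≠ 0 ∧ S.card = 2^n ∧
    (∀ r ∈ S, 0 < r ∧ r < 1) ∧ g n = C a * ∏ r ∈ S, (X - C r) := by
  induction n with
  | zero =>
    refine ⟨{(1:ℝ)/2}, 2, by norm_num, by norm_num, by norm_num, ?_⟩
    have hC2 : (C (2:ℝ)) = 2 := by simp [map_ofNat]
    rw [g_zero, Finset.prod_singleton, mul_sub, ← map_mul, hC2]
    norm_num
  | succ n ih =>
    obtain ⟨S, a, ha, hcard, hio, hfac⟩ := ih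
    obtain ⟨ε, hε, hS⟩ := (ST n).1
    have hεne : ε ≠ 0 := by intro h; rw [h] at hε; norm_num at hε
    -- Φ of the factorization
    have hΦ : Φ (g n) = ι (C a) * ∏ r ∈ S, (V - ι (C r)) := by
      rw [hfac, map_mul, map_prod]
      rw [Phi_C]
      congr 1
      refine Finset.prod_congr rfl (fun r _ => ?_)
      rw [map_sub, Phi_X, Phi_C]
    have hfac2 : C ε * g (n+1) = C a * ∏ r ∈ S, (pR - C r * qR) := by
      apply ι_inj
      rw [← hS, hΦ, map_mul, map_prod]
      rw [mul_assoc, ← hcard, ← Finset.prod_const (ι qR), ← Finset.prod_mul_distrib]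
      congr 1
      refine Finset.prod_congr rfl (fun r _ => ?_)
      rw [sub_mul, V_mul, ← map_mul, ← map_sub]
    have hfac3 : C ε * g (n+1)
        = C a * ∏ r ∈ S, (C (-(1+3*r)) * ((X - C (bp r)) * (X - C (bm r)))) := by
      rw [hfac2]
      congr 1
      exact Finset.prod_congr rfl (fun r hr => quad_ident (hio r hr).1 (hio r hr).2)
    -- new root set
    set T : Finset ℝ := S.biUnion (fun r => {bp r, bm r}) with hT
    have hdisj : ∀ r ∈ S, ∀ r' ∈ S, r ≠ r' →
        Disjoint ({bp r, bm r} : Finset ℝ) {bp r', bm r'} := by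
      intro r hr r' hr' hne
      rw [Finset.disjoint_left]
      intro x hx hx'
      simp only [Finset.mem_insert, Finset.mem_singleton] at hx hx'
      exact hne (branch_inj (hio r hr).1 (hio r hr).2 (hio r' hr').1 (hio r' hr').2 hx hx')
    have hcardT : T.card = 2^(n+1) := by
      rw [hT, Finset.card_biUnion hdisj]
      have : ∀ r ∈ S, ({bp r, bm r} : Finset ℝ).card = 2 := by
        intro r hr
        rw [Finset.card_insert_of_notMem (by simp [bp_ne_bm (hio r hr).1 (hio r hr).2]),
          Finset.card_singleton]
      rw [Finset.sum_congr rfl this, Finset.sum_const, hcard]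
      ring
    have hprodT : ∏ x ∈ T, (X - C x)
        = ∏ r ∈ S, ((X - C (bp r)) * (X - C (bm r))) := by
      rw [hT, Finset.prod_biUnion hdisj]
      refine Finset.prod_congr rfl (fun r hr => ?_)
      rw [Finset.prod_pair (bp_ne_bm (hio r hr).1 (hio r hr).2)]
    refine ⟨T, ε * (a * ∏ r ∈ S, (-(1+3*r))), ?_, hcardT, ?_, ?_⟩
    · refine mul_ne_zero hεne (mul_ne_zero ha ?_)
      refine Finset.prod_ne_zero_iff.2 (fun r hr => ?_)
      have := (hio r hr).1; intro h; linarith [neg_eq_zero.1 h]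
    · intro x hx
      rw [hT, Finset.mem_biUnion] at hx
      obtain ⟨r, hr, hx⟩ := hx
      simp only [Finset.mem_insert, Finset.mem_singleton] at hx
      rcases hx with h | h <;> subst h
      · exact ⟨(bp_mem (hio r hr).1 (hio r hr).2).1, (bp_mem (hio r hr).1 (hio r hr).2).2⟩
      · exact ⟨(bm_mem (hio r hr).1 (hio r hr).2).1, (bm_mem (hio r hr).1 (hio r hr).2).2⟩
    · -- final factorization
      have hg : g (n+1) = C ε * (C ε * g (n+1)) := by
        rw [← mul_assoc, ← map_mul, ← sq, hε, map_one, one_mul]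
      rw [hg, hfac3, hprodT, Finset.prod_mul_distrib]
      simp only [map_mul, map_prod]
      ring

/-! ### Degrees and leading coefficients -/

lemma g_natDegree (n : ℕ) : (g n).natDegree = 2^n ∧ (g n).leadingCoeff ≠ 0 := by
  obtain ⟨S, a, ha, hcard, hio, hfac⟩ := Main n
  have hprod : (∏ r ∈ S, (X - C r) : Polynomial ℝ).natDegree = S.card := by
    rw [natDegree_prod _ _ (fun r _ => X_sub_C_ne_zero r)]
    simp [natDegree_X_sub_C]
  have hne : (g n) ≠ 0 := by
    rw [hfac]
    exact mul_ne_zero (by simpa using ha)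
      (Finset.prod_ne_zero_iff.2 fun r _ => X_sub_C_ne_zero r)
  refine ⟨?_, leadingCoeff_ne_zero.2 hne⟩
  rw [hfac, natDegree_C_mul ha, hprod, hcard]

lemma G_natDegree (n : ℕ) : (G n).natDegree = 2^n := by
  have h := (g_natDegree n).1
  rwa [g, rmap, coe_mapRingHom, natDegree_map_eq_of_injective
    (show Function.Injective (Int.castRingHom ℝ) from Int.cast_injective)] at h

lemma G_ne_zero (n : ℕ) : G n ≠ 0 := by
  intro h
  have := (g_natDegree n).2
  rw [g, h, map_zero] at this
  simp at this

def cm : ℕ → ℤ × ℤ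
  | 0 => (2, 1)
  | n+1 => ((cm n).1^2 + (cm n).2^2, (cm n).2 * (cm n).1)

def c (n : ℕ) : ℤ := (cm n).1
def m (n : ℕ) : ℤ := (cm n).2

lemma c_zero : c 0 = 2 := rfl
lemma m_zero : m 0 = 1 := rfl
lemma c_succ (n : ℕ) : c (n+1) = c n ^2 + m n ^2 := rfl
lemma m_succ (n : ℕ) : m (n+1) = m n * c n := rfl

lemma cm_pos (n : ℕ) : 0 < c n ∧ 0 < m n := by
  induction n with
  | zero => exact ⟨by norm_num [c_zero], by norm_num [m_zero]⟩
  | succ n ih =>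
    refine ⟨?_, ?_⟩
    · rw [c_succ]; nlinarith [ih.1, ih.2]
    · rw [m_succ]; exact mul_pos ih.2 ih.1

lemma w_natDegree : (w : Polynomial ℤ).natDegree = 2 ∧ (w).leadingCoeff = 1 := by
  constructor
  · rw [w]; compute_degree!
  · rw [w]
    have : (X^2 - X : Polynomial ℤ).natDegree = 2 := by compute_degree!
    rw [leadingCoeff, this]
    simp [coeff_X]

lemma GH_lead (n : ℕ) : (G n).leadingCoeff = c n ∧ (H n).natDegree = 2^n - 1 ∧
    (H n).leadingCoeff = m n := by
  induction n with
  | zero =>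
    refine ⟨?_, by simp [H_zero], by simp [H_zero, m_zero]⟩
    rw [G_zero, c_zero]
    have h2 : (2*X - 1 : Polynomial ℤ).natDegree = 1 := by compute_degree!
    rw [leadingCoeff, h2]
    simp [coeff_one]
  | succ n ih =>
    obtain ⟨hG, hHdeg, hH⟩ := ih
    have hGdeg := G_natDegree n
    have hone : (1:ℕ) ≤ 2^n := Nat.one_le_two_pow
    -- degrees of the two summands
    have hA : (G n ^2).natDegree = 2^(n+1) := by
      rw [natDegree_pow, hGdeg]; ring
    have hAl : (G n ^2).leadingCoeff = c n ^2 := by rw [leadingCoeff_pow, hG]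
    have hBdeg : (w * H n ^2).natDegree = 2^(n+1) := by
      rw [natDegree_mul (by
          intro hw
          have := w_natDegree.2; rw [hw] at this; simp at this)
        (pow_ne_zero _ (by
          intro hH0
          have := cm_pos n
          rw [hH0] at hH; simp at hH; omega)),
        natDegree_pow, w_natDegree.1, hHdeg]
      omega
    have hBl : (w * H n ^2).leadingCoeff = m n ^2 := by
      rw [leadingCoeff_mul, leadingCoeff_pow, w_natDegree.2, hH, one_mul]
    -- the sum
    have hcoeff : (G (n+1)).coeff (2^(n+1)) = c n ^2 + m n ^2 := by
      have e1 : (G n ^2).coeff (2^(n+1)) = c n ^2 := by rw [← hA, ← hAl]; rfl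
      have e2 : (w * H n ^2).coeff (2^(n+1)) = m n ^2 := by rw [← hBdeg, ← hBl]; rfl
      rw [G_succ, coeff_add, e1, e2]
    have hGd1 : (G (n+1)).natDegree = 2^(n+1) := G_natDegree (n+1)
    refine ⟨?_, ?_, ?_⟩
    · rw [leadingCoeff, hGd1, hcoeff, c_succ]
    · rw [H_succ, natDegree_mul (by
          intro hH0
          have := cm_pos n
          rw [hH0] at hH; simp at hH; omega) (G_ne_zero n), hHdeg, hGdeg]
      omega
    · rw [H_succ, leadingCoeff_mul, hH, hG, m_succ]

/-! ### Final polynomials and complex factorization -/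

def P (k : ℕ) : Polynomial ℤ := (G k).comp (X^2)

lemma P_lead (k : ℕ) : (P k).leadingCoeff = c k := by
  have hX2 : (X^2 : Polynomial ℤ).natDegree = 2 := natDegree_X_pow 2
  rw [P, leadingCoeff_comp (by rw [hX2]; norm_num), (GH_lead k).1,
    (monic_X_pow 2).leadingCoeff]
  simp

lemma Pfac (k : ℕ) : ∃ M : Multiset ℂ,
    ((P k).map (Int.castRingHom ℂ)) = C ((c k : ℝ) : ℂ) * (M.map (fun z => X - C z)).prod ∧
    Multiset.card M = 2^(k+1) ∧ M.Nodup ∧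
    (∀ z ∈ M, ∃ x : ℝ, x ∈ Set.Icc (-1:ℝ) 1 ∧ z = (x:ℂ)) := by
  obtain ⟨S, a, ha, hcard, hio, hfac⟩ := Main k
  -- identify a with c k
  have hlcg : (g k).leadingCoeff = ((c k : ℝ)) := by
    rw [g, rmap, coe_mapRingHom, ← (GH_lead k).1]
    rw [leadingCoeff, leadingCoeff, natDegree_map_eq_of_injective
      (show Function.Injective (Int.castRingHom ℝ) from Int.cast_injective), coeff_map]
    rfl
  have hmon : (∏ r ∈ S, (X - C r) : Polynomial ℝ).Monic :=
    monic_prod_of_monic _ _ (fun r _ => monic_X_sub_C r)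
  have ha_eq : a = (c k : ℝ) := by
    rw [← hlcg, hfac, leadingCoeff_mul, hmon.leadingCoeff, leadingCoeff_C, mul_one]
  -- complex factorization of g k composed with X^2
  set u : ℝ → ℂ := fun r => ((Real.sqrt r : ℝ) : ℂ) with hu
  set M : Multiset ℂ := S.val.map u + S.val.map (fun r => -(u r)) with hM
  have husq : ∀ r ∈ S, (u r)^2 = (r:ℂ) := by
    intro r hr
    rw [hu]
    push_cast
    rw [← Complex.ofReal_pow, Real.sq_sqrt (hio r hr).1.le]
  refine ⟨M, ?_, ?_, ?_, ?_⟩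
  · -- product identity
    have h1 : (P k).map (Int.castRingHom ℂ)
        = ((g k).map (algebraMap ℝ ℂ)).comp (X^2) := by
      have hhom : (algebraMap ℝ ℂ).comp (Int.castRingHom ℝ) = Int.castRingHom ℂ :=
        RingHom.ext_int _ _
      rw [P, Polynomial.map_comp, g, rmap, coe_mapRingHom, Polynomial.map_map, hhom]
      simp
    rw [h1, hfac, ha_eq]
    have h2 : ((C ((c k:ℝ)) * ∏ r ∈ S, (X - C r)).map (algebraMap ℝ ℂ))
        = C ((c k : ℝ):ℂ) * ∏ r ∈ S, (X - C (r:ℂ)) := by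
      rw [Polynomial.map_mul, Polynomial.map_prod, map_C]
      congr 1
      exact Finset.prod_congr rfl fun r _ => by
        rw [Polynomial.map_sub, map_X, map_C]; rfl
    rw [h2]
    have h3 : ((C ((c k : ℝ):ℂ) * ∏ r ∈ S, (X - C (r:ℂ))).comp (X^2))
        = C ((c k : ℝ):ℂ) * ∏ r ∈ S, (X^2 - C (r:ℂ)) := by
      rw [mul_comp, C_comp]
      congr 1
      rw [prod_comp]
      exact Finset.prod_congr rfl fun r _ => by rw [sub_comp, X_comp, C_comp]
    rw [h3]
    congr 1
    -- split M product
    rw [hM, Multiset.map_add, Multiset.prod_add, Multiset.map_map, Multiset.map_map]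
    have e1 : ∀ (f : ℝ → ℂ), (Multiset.map ((fun z => X - C z) ∘ f) S.val).prod
        = ∏ r ∈ S, (X - C (f r)) := fun f => rfl
    rw [e1, e1, ← Finset.prod_mul_distrib]
    refine Finset.prod_congr rfl fun r hr => ?_
    have := husq r hr
    rw [show (X - C (u r)) * (X - C (-(u r))) = X^2 - C ((u r)^2) from by
      rw [map_neg, map_pow]; ring]
    rw [this]
  · rw [hM]
    simp [hcard]
    ring
  · -- nodup
    rw [hM]
    have hinj : ∀ r ∈ S, ∀ r' ∈ S, u r = u r' → r = r' := by
      intro r hr r' hr' h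
      have : ((r:ℂ)) = (r':ℂ) := by rw [← husq r hr, ← husq r' hr', h]
      exact_mod_cast this
    have hn1 : (S.val.map u).Nodup := Multiset.Nodup.map_on hinj S.nodup
    have hn2 : (S.val.map (fun r => -(u r))).Nodup := by
      refine Multiset.Nodup.map_on ?_ S.nodup
      intro r hr r' hr' h
      exact hinj r hr r' hr' (by rw [← neg_neg (u r), h, neg_neg])
    rw [Multiset.nodup_add]
    refine ⟨hn1, hn2, ?_⟩
    rw [Multiset.disjoint_left]
    rintro z hz hz'
    obtain ⟨r, hr, rfl⟩ := Multiset.mem_map.1 hz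
    obtain ⟨r', hr', he⟩ := Multiset.mem_map.1 hz'
    have hsr : (0:ℝ) < Real.sqrt r := Real.sqrt_pos.2 (hio r (by exact hr)).1
    have hsr' : (0:ℝ) < Real.sqrt r' := Real.sqrt_pos.2 (hio r' (by exact hr')).1
    have he2 : ((-Real.sqrt r' : ℝ) : ℂ) = ((Real.sqrt r : ℝ) : ℂ) := by push_cast; exact he
    have he3 : -Real.sqrt r' = Real.sqrt r := Complex.ofReal_injective he2
    linarith
  · -- membership
    intro z hz
    rw [hM, Multiset.mem_add] at hz
    have key : ∀ r ∈ S, Real.sqrt r ∈ Set.Icc (-1:ℝ) 1 := by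
      intro r hr
      have h0 := (hio r hr).1
      have h1 := (hio r hr).2
      constructor
      · linarith [Real.sqrt_nonneg r]
      · rw [show (1:ℝ) = Real.sqrt 1 by simp]
        exact Real.sqrt_le_sqrt (by linarith)
    rcases hz with hz | hz
    · obtain ⟨r, hr, rfl⟩ := Multiset.mem_map.1 hz
      exact ⟨Real.sqrt r, key r hr, rfl⟩
    · obtain ⟨r, hr, rfl⟩ := Multiset.mem_map.1 hz
      refine ⟨-(Real.sqrt r), ?_, by rw [hu]; push_cast; ring⟩
      have := key r hr
      constructor <;> [linarith [this.2]; linarith [this.1]]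

/-! ### Numeric bound -/

def BQ : ℚ := 154170092/100000000

lemma BQ_pos : (0:ℚ) < BQ := by norm_num [BQ]

lemma step {n : ℕ} {s r s' r' : ℚ}
    (hc : (c n : ℚ) ≤ s * BQ^(2^(n+1))) (hm : (m n : ℚ) ≤ r * (c n : ℚ))
    (hr1 : r ≤ 1) (hs' : s^2*(1+r^2) ≤ s') (hr' : r ≤ r'*(1+r^2)) :
    (c (n+1) : ℚ) ≤ s' * BQ^(2^(n+1+1)) ∧ (m (n+1) : ℚ) ≤ r' * (c (n+1) : ℚ) := by
  have hcp : (0:ℚ) < (c n : ℚ) := by exact_mod_cast (cm_pos n).1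
  have hmp : (0:ℚ) < (m n : ℚ) := by exact_mod_cast (cm_pos n).2
  have hB : (0:ℚ) < BQ^(2^(n+1)) := pow_pos BQ_pos _
  have hr0 : (0:ℚ) < r := by nlinarith
  have hs0 : (0:ℚ) < s := by nlinarith
  have hr'0 : (0:ℚ) ≤ r' := by nlinarith
  have hcc : (c (n+1) : ℚ) = (c n:ℚ)^2 + (m n:ℚ)^2 := by rw [c_succ]; push_cast; ring
  have hmm : (m (n+1) : ℚ) = (m n:ℚ) * (c n:ℚ) := by rw [m_succ]; push_cast; ring
  have k1 : (m n:ℚ)^2 ≤ r^2 * (c n:ℚ)^2 := by nlinarith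
  have k2 : (c n:ℚ)^2 ≤ s^2 * (BQ^(2^(n+1)))^2 := by nlinarith
  constructor
  · have hBsq : BQ^(2^(n+1+1)) = (BQ^(2^(n+1)))^2 := by
      rw [← pow_mul, pow_succ]
    have k3 : (1+r^2) * (c n:ℚ)^2 ≤ (1+r^2) * (s^2 * (BQ^(2^(n+1)))^2) :=
      mul_le_mul_of_nonneg_left k2 (by positivity)
    have k4 : s^2*(1+r^2) * (BQ^(2^(n+1)))^2 ≤ s' * (BQ^(2^(n+1)))^2 :=
      mul_le_mul_of_nonneg_right hs' (by positivity)
    rw [hcc, hBsq]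
    nlinarith [k1, k3, k4]
  · have h5 : (0:ℚ) ≤ (r*(c n:ℚ) - m n) * ((c n:ℚ) - (m n:ℚ)*r) := by
      have e1 : (0:ℚ) ≤ r*(c n:ℚ) - m n := by linarith
      have e2 : (0:ℚ) ≤ (c n:ℚ) - (m n:ℚ)*r := by nlinarith
      exact mul_nonneg e1 e2
    have h6 : r*((c n:ℚ)^2+(m n:ℚ)^2) ≤ r'*(1+r^2)*((c n:ℚ)^2+(m n:ℚ)^2) := by
      have : (0:ℚ) ≤ (c n:ℚ)^2+(m n:ℚ)^2 := by positivity
      nlinarith [this]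
    rw [hmm, hcc]
    nlinarith [h5, h6, sq_nonneg r, hcp, hmp]

def ρ : ℚ := (28478407312908895146510702732645610106176007/200000000000000000000000000000000000000000000 : ℚ)

lemma chain : (c 22 : ℚ) ≤ (473026258883720672316088422748753525217766941/500000000000000000000000000000000000000000000 : ℚ) * BQ^(2^(22+1)) ∧ (m 22 : ℚ) ≤ ρ * (c 22 : ℚ) := by
  have h0 : (c 0 : ℚ) ≤ (841452746941009480839926245692285014842280903/1000000000000000000000000000000000000000000000 : ℚ) * BQ^(2^(0+1)) ∧
      (m 0 : ℚ) ≤ (1/2 : ℚ) * (c 0 : ℚ) := by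
    rw [c_zero, m_zero]
    norm_num [BQ]
  have h1 : (c 1 : ℚ) ≤ (177010681333642635053769873695278828401837717/200000000000000000000000000000000000000000000 : ℚ) * BQ^(2^(1+1)) ∧
      (m 1 : ℚ) ≤ (400000000000000000000000000000000000000000001/1000000000000000000000000000000000000000000000 : ℚ) * (c 1 : ℚ) :=
    step h0.1 h0.2 (by norm_num) (by norm_num [BQ]) (by norm_num)
  have h2 : (c 2 : ℚ) ≤ (908650657879811054635336893528015951212728957/1000000000000000000000000000000000000000000000 : ℚ) * BQ^(2^(2+1)) ∧
      (m 2 : ℚ) ≤ (43103448275862068965517241379310344827586207/125000000000000000000000000000000000000000000 : ℚ) * (c 2 : ℚ) :=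
    step h1.1 h1.2 (by norm_num) (by norm_num [BQ]) (by norm_num)
  have h3 : (c 3 : ℚ) ≤ (923820336503631442026100058455414761980443489/1000000000000000000000000000000000000000000000 : ℚ) * BQ^(2^(3+1)) ∧
      (m 3 : ℚ) ≤ (308182784272051009564293304994686503719447397/1000000000000000000000000000000000000000000000 : ℚ) * (c 3 : ℚ) :=
    step h2.1 h2.2 (by norm_num) (by norm_num [BQ]) (by norm_num)
  have h4 : (c 4 : ℚ) ≤ (934501249232483427837747725940145249940820581/1000000000000000000000000000000000000000000000 : ℚ) * BQ^(2^(4+1)) ∧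
      (m 4 : ℚ) ≤ (35181434042127475682794939257266798751213153/125000000000000000000000000000000000000000000 : ℚ) * (c 4 : ℚ) :=
    step h3.1 h3.2 (by norm_num) (by norm_num [BQ]) (by norm_num)
  have h5 : (c 5 : ℚ) ≤ (4712351984556402944825213869382915492149133/5000000000000000000000000000000000000000000 : ℚ) * BQ^(2^(5+1)) ∧
      (m 5 : ℚ) ≤ (1629954934017572618882048164332088407844303/6250000000000000000000000000000000000000000 : ℚ) * (c 5 : ℚ) :=
    step h4.1 h4.2 (by norm_num) (by norm_num [BQ]) (by norm_num)
  have h6 : (c 6 : ℚ) ≤ (474331459694923904058435180775773265914587079/500000000000000000000000000000000000000000000 : ℚ) * BQ^(2^(6+1)) ∧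
      (m 6 : ℚ) ≤ (244185060465566195277321207017458859513777847/1000000000000000000000000000000000000000000000 : ℚ) * (c 6 : ℚ) :=
    step h5.1 h5.2 (by norm_num) (by norm_num [BQ]) (by norm_num)
  have h7 : (c 7 : ℚ) ≤ (953622738529458760275984855929737489097577537/1000000000000000000000000000000000000000000000 : ℚ) * BQ^(2^(7+1)) ∧
      (m 7 : ℚ) ≤ (115222248816665734484873149376718034516504841/500000000000000000000000000000000000000000000 : ℚ) * (c 7 : ℚ) :=
    step h6.1 h6.2 (by norm_num) (by norm_num [BQ]) (by norm_num)
  have h8 : (c 8 : ℚ) ≤ (957689516115904807984730754501415604329005263/1000000000000000000000000000000000000000000000 : ℚ) * BQ^(2^(8+1)) ∧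
      (m 8 : ℚ) ≤ (54705981505503523011402811420428694192743947/250000000000000000000000000000000000000000000 : ℚ) * (c 8 : ℚ) :=
    step h7.1 h7.2 (by norm_num) (by norm_num [BQ]) (by norm_num)
  have h9 : (c 9 : ℚ) ≤ (961086857700185211677986383498768009800429501/1000000000000000000000000000000000000000000000 : ℚ) * BQ^(2^(9+1)) ∧
      (m 9 : ℚ) ≤ (104412294056879122299981215474460522420100829/500000000000000000000000000000000000000000000 : ℚ) * (c 9 : ℚ) :=
    step h8.1 h8.2 (by norm_num) (by norm_num [BQ]) (by norm_num)
  have h10 : (c 10 : ℚ) ≤ (963967862920465017471393054905926778697541923/1000000000000000000000000000000000000000000000 : ℚ) * BQ^(2^(10+1)) ∧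
      (m 10 : ℚ) ≤ (100049370272341241215554413970204755972207001/500000000000000000000000000000000000000000000 : ℚ) * (c 10 : ℚ) :=
    step h9.1 h9.2 (by norm_num) (by norm_num [BQ]) (by norm_num)
  have h11 : (c 11 : ℚ) ≤ (193288022532612642083956520827215946368316219/200000000000000000000000000000000000000000000 : ℚ) * BQ^(2^(11+1)) ∧
      (m 11 : ℚ) ≤ (96197663356319763409591457485859739418599609/500000000000000000000000000000000000000000000 : ℚ) * (c 11 : ℚ) :=
    step h10.1 h10.2 (by norm_num) (by norm_num [BQ]) (by norm_num)
  have h12 : (c 12 : ℚ) ≤ (193715927982849860063513551439096744896895811/200000000000000000000000000000000000000000000 : ℚ) * BQ^(2^(12+1)) ∧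
      (m 12 : ℚ) ≤ (92763917726811517000400141593363352570139481/500000000000000000000000000000000000000000000 : ℚ) * (c 12 : ℚ) :=
    step h11.1 h11.2 (by norm_num) (by norm_num [BQ]) (by norm_num)
  have h13 : (c 13 : ℚ) ≤ (97043806402906677868613629528658182002890943/100000000000000000000000000000000000000000000 : ℚ) * BQ^(2^(13+1)) ∧
      (m 13 : ℚ) ≤ (179354354938585043367898350084934223326136523/1000000000000000000000000000000000000000000000 : ℚ) * (c 13 : ℚ) :=
    step h12.1 h12.2 (by norm_num) (by norm_num [BQ]) (by norm_num)
  have h14 : (c 14 : ℚ) ≤ (972044236808699388062848118777909747420073903/1000000000000000000000000000000000000000000000 : ℚ) * BQ^(2^(14+1)) ∧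
      (m 14 : ℚ) ≤ (8688234745138573792033192960640084229031881/50000000000000000000000000000000000000000000 : ℚ) * (c 14 : ℚ) :=
    step h13.1 h13.2 (by norm_num) (by norm_num [BQ]) (by norm_num)
  have h15 : (c 15 : ℚ) ≤ (973399562909021519181050035286531845591952349/1000000000000000000000000000000000000000000000 : ℚ) * BQ^(2^(15+1)) ∧
      (m 15 : ℚ) ≤ (84335895163632479642382461624424336952347857/500000000000000000000000000000000000000000000 : ℚ) * (c 15 : ℚ) :=
    step h14.1 h14.2 (by norm_num) (by norm_num [BQ]) (by norm_num)
  have h16 : (c 16 : ℚ) ≤ (7795707509785450708380937273788976578441991/8000000000000000000000000000000000000000000 : ℚ) * BQ^(2^(16+1)) ∧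
      (m 16 : ℚ) ≤ (164005797052361644588724829205896035933747503/1000000000000000000000000000000000000000000000 : ℚ) * (c 16 : ℚ) :=
    step h15.1 h15.2 (by norm_num) (by norm_num [BQ]) (by norm_num)
  have h17 : (c 17 : ℚ) ≤ (39004827024313036101422616494947745026823717/40000000000000000000000000000000000000000000 : ℚ) * BQ^(2^(17+1)) ∧
      (m 17 : ℚ) ≤ (159709934958579851643580927245889971999044561/1000000000000000000000000000000000000000000000 : ℚ) * (c 17 : ℚ) :=
    step h16.1 h16.2 (by norm_num) (by norm_num [BQ]) (by norm_num)
  have h18 : (c 18 : ℚ) ≤ (121889272108866113538659271045233929644167343/125000000000000000000000000000000000000000000 : ℚ) * BQ^(2^(18+1)) ∧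
      (m 18 : ℚ) ≤ (155737497597856713539342791516306153245121001/1000000000000000000000000000000000000000000000 : ℚ) * (c 18 : ℚ) :=
    step h17.1 h17.2 (by norm_num) (by norm_num [BQ]) (by norm_num)
  have h19 : (c 19 : ℚ) ≤ (973909676922897497014311714001642593349437201/1000000000000000000000000000000000000000000000 : ℚ) * BQ^(2^(19+1)) ∧
      (m 19 : ℚ) ≤ (76024829792943745445271186210457829054498453/500000000000000000000000000000000000000000000 : ℚ) * (c 19 : ℚ) :=
    step h18.1 h18.2 (by norm_num) (by norm_num [BQ]) (by norm_num)
  have h20 : (c 20 : ℚ) ≤ (121303565693283037833104396981382016448710381/125000000000000000000000000000000000000000000 : ℚ) * BQ^(2^(20+1)) ∧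
      (m 20 : ℚ) ≤ (14861384147500151688809448749988965531994457/100000000000000000000000000000000000000000000 : ℚ) * (c 20 : ℚ) :=
    step h19.1 h19.2 (by norm_num) (by norm_num [BQ]) (by norm_num)
  have h21 : (c 21 : ℚ) ≤ (481265337594178905743023626588104747663933067/500000000000000000000000000000000000000000000 : ℚ) * BQ^(2^(21+1)) ∧
      (m 21 : ℚ) ≤ (145402471742068650907439244802561014410315857/1000000000000000000000000000000000000000000000 : ℚ) * (c 21 : ℚ) :=
    step h20.1 h20.2 (by norm_num) (by norm_num [BQ]) (by norm_num)
  have h22 : (c 22 : ℚ) ≤ (473026258883720672316088422748753525217766941/500000000000000000000000000000000000000000000 : ℚ) * BQ^(2^(22+1)) ∧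
      (m 22 : ℚ) ≤ (28478407312908895146510702732645610106176007/200000000000000000000000000000000000000000000 : ℚ) * (c 22 : ℚ) :=
    step h21.1 h21.2 (by norm_num) (by norm_num [BQ]) (by norm_num)
  exact ⟨h22.1, h22.2⟩

lemma tail (n : ℕ) (hn : 22 ≤ n) :
    (c n : ℚ) * (1 + ρ^2) ≤ BQ^(2^(n+1)) ∧ (m n : ℚ) ≤ ρ * (c n : ℚ) := by
  induction n, hn using Nat.le_induction with
  | base =>
    refine ⟨?_, chain.2⟩
    have hB : (0:ℚ) < BQ^(2^(22+1)) := pow_pos BQ_pos _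
    have hnum : ((473026258883720672316088422748753525217766941/500000000000000000000000000000000000000000000 : ℚ)) * (1 + ρ^2) ≤ 1 := by norm_num [ρ]
    have ht : (0:ℚ) ≤ 1 + ρ^2 := by linarith [sq_nonneg ρ]
    calc (c 22 : ℚ) * (1+ρ^2)
        ≤ ((473026258883720672316088422748753525217766941/500000000000000000000000000000000000000000000 : ℚ) * BQ^(2^(22+1))) * (1+ρ^2) :=
          mul_le_mul_of_nonneg_right chain.1 ht
      _ = ((473026258883720672316088422748753525217766941/500000000000000000000000000000000000000000000 : ℚ) * (1+ρ^2)) * BQ^(2^(22+1)) := by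
          ring
      _ ≤ 1 * BQ^(2^(22+1)) := mul_le_mul_of_nonneg_right hnum hB.le
      _ = BQ^(2^(22+1)) := one_mul _
  | succ n hn ih =>
    obtain ⟨ih1, ih2⟩ := ih
    have hcp : (0:ℚ) < (c n : ℚ) := by exact_mod_cast (cm_pos n).1
    have hmp : (0:ℚ) < (m n : ℚ) := by exact_mod_cast (cm_pos n).2
    have hB : (0:ℚ) < BQ^(2^(n+1)) := pow_pos BQ_pos _
    have hcc : (c (n+1) : ℚ) = (c n:ℚ)^2 + (m n:ℚ)^2 := by rw [c_succ]; push_cast; ring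
    have hmm : (m (n+1) : ℚ) = (m n:ℚ) * (c n:ℚ) := by rw [m_succ]; push_cast; ring
    have hρ : (0:ℚ) < ρ := by norm_num [ρ]
    have k1 : (m n:ℚ)^2 ≤ ρ^2 * (c n:ℚ)^2 := by nlinarith
    constructor
    · have hBsq : BQ^(2^(n+1+1)) = (BQ^(2^(n+1)))^2 := by
        rw [← pow_mul, pow_succ]
      rw [hcc, hBsq]
      have ht : (0:ℚ) ≤ 1 + ρ^2 := by linarith [sq_nonneg ρ]
      have k7 : ((c n:ℚ)*(1+ρ^2))^2 ≤ (BQ^(2^(n+1)))^2 :=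
        pow_le_pow_left₀ (by nlinarith [sq_nonneg ρ, hcp]) ih1 2
      have k8 : (c n:ℚ)^2 + (m n:ℚ)^2 ≤ (1+ρ^2)*(c n:ℚ)^2 := by linarith [k1]
      calc ((c n:ℚ)^2 + (m n:ℚ)^2) * (1+ρ^2)
          ≤ ((1+ρ^2)*(c n:ℚ)^2) * (1+ρ^2) := mul_le_mul_of_nonneg_right k8 ht
        _ = ((c n:ℚ) * (1+ρ^2))^2 := by ring
        _ ≤ (BQ^(2^(n+1)))^2 := k7
    · rw [hmm, hcc]
      nlinarith [k1, hcp, hmp, hρ]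

lemma c_le_B (n : ℕ) (hn : 22 ≤ n) : ((c n : ℝ)) ≤ (1.54170092:ℝ)^(2^(n+1)) := by
  have h := (tail n hn).1
  have hcp : (0:ℚ) < (c n : ℚ) := by exact_mod_cast (cm_pos n).1
  have h2 : (c n : ℚ) ≤ BQ^(2^(n+1)) := by nlinarith [sq_nonneg ρ]
  have h3 : ((c n : ℚ) : ℝ) ≤ ((BQ^(2^(n+1)) : ℚ) : ℝ) := Rat.cast_le.2 h2
  have hBcast : ((BQ : ℚ) : ℝ) = (1.54170092:ℝ) := by norm_num [BQ]
  rw [Rat.cast_pow, hBcast] at h3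
  exact_mod_cast h3

/-! ### Assembly -/

lemma Proots (k : ℕ) :
    ((P k).map (Int.castRingHom ℂ)).roots.Nodup ∧
    (∀ z ∈ ((P k).map (Int.castRingHom ℂ)).roots, ∃ x ∈ Set.Icc (-1:ℝ) 1, z = (x:ℂ)) ∧
    (P k).degree = ((2^(k+1) : ℕ) : WithBot ℕ) := by
  obtain ⟨M, hfac, hcard, hnodup, hmem⟩ := Pfac k
  have hcne : ((c k : ℝ) : ℂ) ≠ 0 := by
    have := (cm_pos k).1.ne'
    exact_mod_cast (show ((c k : ℝ)) ≠ 0 by exact_mod_cast this)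
  have hroots : ((P k).map (Int.castRingHom ℂ)).roots = M := by
    rw [hfac, roots_C_mul _ hcne, roots_multiset_prod_X_sub_C]
  refine ⟨hroots ▸ hnodup, ?_, ?_⟩
  · intro z hz
    rw [hroots] at hz
    obtain ⟨x, hx, he⟩ := hmem z hz
    exact ⟨x, hx, he⟩
  · have hm : ((M.map fun z => X - C z).prod).Monic :=
      monic_multiset_prod_of_monic _ _ (fun z _ => monic_X_sub_C z)
    have hdeg : ((P k).map (Int.castRingHom ℂ)).degree = ((2^(k+1) : ℕ) : WithBot ℕ) := by
      rw [hfac, degree_C_mul hcne, degree_eq_natDegree hm.ne_zero,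
        natDegree_multiset_prod_X_sub_C_eq_card, hcard]
    rw [← hdeg, degree_map_eq_of_injective
      (show Function.Injective (Int.castRingHom ℂ) from Int.cast_injective)]

lemma value_le (k : ℕ) (hk : 22 ≤ k) :
    (|(P k).leadingCoeff| : ℝ) ^ (((2^(k+1) : ℕ) : ℝ))⁻¹ ≤ (1.54170092:ℝ) := by
  have hcpos := (cm_pos k).1
  have habs : (|(P k).leadingCoeff| : ℝ) = ((c k : ℤ) : ℝ) := by
    rw [P_lead, abs_of_pos (show (0:ℝ) < ((c k : ℤ):ℝ) by exact_mod_cast hcpos)]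
  rw [habs]
  have h1 : ((c k : ℤ):ℝ) ≤ (1.54170092:ℝ)^(2^(k+1)) := c_le_B k hk
  have hN : (0:ℝ) < ((2^(k+1) : ℕ) : ℝ) := by positivity
  have h2 : (((c k : ℤ):ℝ)) ^ (((2^(k+1):ℕ):ℝ))⁻¹
      ≤ ((1.54170092:ℝ)^(2^(k+1))) ^ (((2^(k+1):ℕ):ℝ))⁻¹ :=
    Real.rpow_le_rpow (by exact_mod_cast hcpos.le) h1 (by positivity)
  refine h2.trans (le_of_eq ?_)
  rw [← Real.rpow_natCast (1.54170092:ℝ) (2^(k+1)), ← Real.rpow_mul (by norm_num),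
    mul_inv_cancel₀ hN.ne', Real.rpow_one]

end Gor

open Gor in
theorem stmt3 :
    ∃ (P : ℕ → Polynomial ℤ) (d : ℕ → ℕ),
      Tendsto d atTop atTop ∧
      (∀ k : ℕ, (P k).degree = d k) ∧
      (∀ k : ℕ, ((P k).map (Int.castRingHom ℂ)).roots.Nodup) ∧
      (∀ k : ℕ, ∀ z ∈ ((P k).map (Int.castRingHom ℂ)).roots,
        ∃ x ∈ Set.Icc (-1 : ℝ) 1, z = (x : ℂ)) ∧
      liminf (fun k : ℕ => (|(P k).leadingCoeff| : ℝ) ^ ((d k : ℝ)⁻¹)) atTop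
        ≤ (1.54170092 : ℝ) := by
  refine ⟨Gor.P, fun k => 2^(k+1), ?_, ?_, ?_, ?_, ?_⟩
  · exact (tendsto_pow_atTop_atTop_of_one_lt (by norm_num)).comp
      (Filter.tendsto_add_atTop_nat 1)
  · exact fun k => (Proots k).2.2
  · exact fun k => (Proots k).1
  · exact fun k z hz => (Proots k).2.1 z hz
  · apply Filter.liminf_le_of_frequently_le
    · apply Filter.Eventually.frequently
      filter_upwards [Filter.eventually_ge_atTop 22] with k hk
      exact value_le k hk
    · exact ⟨0, Filter.eventually_map.2 (Filter.Eventually.of_forall fun k =>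
        Real.rpow_nonneg (by positivity) _)⟩

end
end

section
/- Fix M > 0 and let D = {z ∈ ℂ : |z| ≤ 1}. Let P_n(z) = a_{n,n} ∏_{k=1}^n (z − α_{k,n}) ∈ ℤ[x] be a polynomial of exact degree n with |a_{n,n}| ≤ M and all complex zeros α_{1,n}, …, α_{n,n} simple and lying in D. Then for every integer m ≥ 1 and every n with n ≥ M and n ≥ 55, the power sums s_m := Σ_{k=1}^n α_{k,n}^m satisfy |s_m| ≤ (24m + 16) √(n log n). -/
open Polynomial

namespace Stmt10Aux

open MvPolynomial AddMonoidAlgebra Finset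

set_option maxHeartbeats 1000000

lemma degreeOf_esymm_le (n k : ℕ) (j : Fin n) :
    degreeOf j (esymm (Fin n) ℤ k) ≤ 1 := by
  classical
  rw [degreeOf_le_iff]
  intro μ hμ
  rw [support_esymm] at hμ
  obtain ⟨s, _, rfl⟩ := Finset.mem_image.mp hμ
  rw [Finsupp.finset_sum_apply]
  calc ∑ i ∈ s, (Finsupp.single i 1) j ≤ ∑ i ∈ s, if i = j then 1 else 0 := by
        apply Finset.sum_le_sum; intro i _; rw [Finsupp.single_apply]
    _ ≤ 1 := by rw [Finset.sum_ite_eq']; split <;> simp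

lemma degreeOf_esymmAlgHomMonomial_le {n : ℕ} (t : Fin n →₀ ℕ) (c : ℤ) (j : Fin n) :
    degreeOf j (esymmAlgHomMonomial (Fin n) t c) ≤ ∑ i, t i := by
  classical
  rw [esymmAlgHomMonomial, esymmAlgHom_apply, MvPolynomial.aeval_monomial]
  refine (degreeOf_mul_le _ _ _).trans ?_
  have h1 : degreeOf j (algebraMap ℤ (MvPolynomial (Fin n) ℤ) c) = 0 := by
    rw [algebraMap_eq, degreeOf_C]
  rw [h1, zero_add]
  rw [Finsupp.prod]
  refine (degreeOf_prod_le _ _ _).trans ?_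
  calc ∑ i ∈ t.support, degreeOf j (esymm (Fin n) ℤ (i + 1) ^ t i)
      ≤ ∑ i ∈ t.support, t i * 1 := by
        apply Finset.sum_le_sum; intro i _
        exact (degreeOf_pow_le _ _ _).trans (by
          exact Nat.mul_le_mul_left _ (degreeOf_esymm_le n (i+1) j))
    _ = ∑ i ∈ t.support, t i := by simp
    _ ≤ ∑ i, t i := Finset.sum_le_sum_of_subset (Finset.subset_univ _)

lemma ftsp_deg {n d : ℕ} (hn : 0 < n) (p : MvPolynomial (Fin n) ℤ)
    (hsym : p.IsSymmetric) (hdeg : ∀ i, degreeOf i p ≤ d) :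
    ∃ q : MvPolynomial (Fin n) ℤ, (∀ t ∈ q.support, ∑ i, t i ≤ d) ∧
      aeval (fun i : Fin n => esymm (Fin n) ℤ (i + 1 : ℕ)) q = p := by
  classical
  induction' he : p.supDegree toLex using WellFoundedLT.induction with u ih generalizing p
  subst he
  obtain rfl | h0 := eq_or_ne p 0
  · exact ⟨0, by simp, by simp⟩
  set c := p.leadingCoeff toLex with hc
  have hc0 : c ≠ 0 := by rwa [hc, Ne, leadingCoeff_eq_zero toLex.injective]
  set t : Fin n →₀ ℕ :=
    Finsupp.equivFunOnFinite.symm (Fin.invAccumulate n n <| ↑(ofLex <| p.supDegree toLex)) with ht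
  have hacc : Fin.accumulate n n (t : Fin n → ℕ) = ↑(ofLex <| p.supDegree toLex) := by
    have hcoe : ⇑t = Fin.invAccumulate n n ⇑(ofLex (supDegree (⇑toLex) p)) := by
      rw [ht]; exact Finsupp.equivFunOnFinite.apply_symm_apply (Fin.invAccumulate n n ⇑(ofLex (supDegree (⇑toLex) p)))
    rw [hcoe]
    exact Fin.accumulate_invAccumulate le_rfl hsym.antitone_supDegree
  -- the sup degree monomial is in the support
  have hmem : ofLex (p.supDegree toLex) ∈ p.support := by
    obtain ⟨a, ha, hea⟩ := exists_supDegree_mem_support toLex h0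
    rwa [hea, ofLex_toLex]
  have hwt : ∑ i, t i ≤ d := by
    have h1 : ∑ i, t i = Fin.accumulate n n (t : Fin n → ℕ) ⟨0, hn⟩ := by
      rw [Fin.accumulate_apply]
      symm
      apply Finset.sum_congr
      · apply Finset.filter_true_of_mem; intro i _; exact Nat.zero_le _
      · intros; rfl
    rw [h1, hacc]
    exact degreeOf_le_iff.mp (hdeg ⟨0, hn⟩) _ hmem
  have hd : (esymmAlgHomMonomial (Fin n) t c).supDegree toLex = p.supDegree toLex := by
    rw [← ofLex_inj, DFunLike.ext'_iff, supDegree_esymmAlgHomMonomial hc0 t le_rfl]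
    exact hacc
  have haev : aeval (fun i : Fin n => esymm (Fin n) ℤ (i + 1 : ℕ)) (monomial t c)
      = esymmAlgHomMonomial (Fin n) t c := by
    rw [esymmAlgHomMonomial, esymmAlgHom_apply]
  obtain he | hne := eq_or_ne p (esymmAlgHomMonomial (Fin n) t c)
  · refine ⟨monomial t c, ?_, by rw [haev, ← he]⟩
    intro s hs
    rw [MvPolynomial.support_monomial, if_neg hc0] at hs
    rw [Finset.mem_singleton] at hs
    subst hs; exact hwt
  · have hlt := (supDegree_sub_lt_of_leadingCoeff_eq toLex.injective hd.symm
      (by rw [leadingCoeff_esymmAlgHomMonomial t le_rfl])).resolve_right hne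
    have hsym' : (p - esymmAlgHomMonomial (Fin n) t c).IsSymmetric :=
      hsym.sub (isSymmetric_esymmAlgHomMonomial t c)
    have hdeg' : ∀ i, degreeOf i (p - esymmAlgHomMonomial (Fin n) t c) ≤ d := by
      intro i
      rw [degreeOf_le_iff]
      intro μ hμ
      have := MvPolynomial.support_sub _ _ _ hμ
      rw [Finset.mem_union] at this
      rcases this with h | h
      · exact degreeOf_le_iff.mp (hdeg i) _ h
      · exact degreeOf_le_iff.mp ((degreeOf_esymmAlgHomMonomial_le t c i).trans hwt) _ h
    obtain ⟨q', hq'w, hq'⟩ := ih _ hlt _ hsym' hdeg' rfl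
    refine ⟨q' + monomial t c, ?_, ?_⟩
    · intro s hs
      have := MvPolynomial.support_add hs
      rw [Finset.mem_union] at this
      rcases this with h | h
      · exact hq'w _ h
      · rw [MvPolynomial.support_monomial, if_neg hc0, Finset.mem_singleton] at h
        subst h; exact hwt
    · rw [map_add, hq', haev]
      ring

lemma exists_int_eq {n d : ℕ} (hn : 0 < n) (P : Polynomial ℤ)
    (hcard : (P.map (Int.castRingHom ℂ)).natDegree = n)
    (α : Fin n → ℂ)
    (hroots : (P.map (Int.castRingHom ℂ)).roots = (Finset.univ.val : Multiset (Fin n)).map α)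
    (G : MvPolynomial (Fin n) ℤ) (hsym : G.IsSymmetric) (hdeg : ∀ i, degreeOf i G ≤ d) :
    ∃ z : ℤ, (z : ℂ) = ((P.leadingCoeff : ℂ)) ^ d * aeval α G := by
  classical
  obtain ⟨q, hw, hq⟩ := ftsp_deg hn G hsym hdeg
  set Pm := P.map (Int.castRingHom ℂ) with hPm
  have hleadm : Pm.leadingCoeff = (P.leadingCoeff : ℂ) := by
    rw [hPm, Polynomial.leadingCoeff_map_of_injective (f := Int.castRingHom ℂ) Int.cast_injective]
    rfl
  have hcard' : Multiset.card Pm.roots = Pm.natDegree := by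
    rw [hroots, Multiset.card_map, hcard]
    simp
  set v : Fin n → ℂ := fun i => Pm.roots.esymm (i.1 + 1) with hv
  have hKey : ∀ i : Fin n, (P.leadingCoeff : ℂ) * v i
      = (-1 : ℂ) ^ (i.1+1) * (P.coeff (n - (i.1+1)) : ℂ) := by
    intro i
    have hkle : n - (i.1+1) ≤ Pm.natDegree := by rw [hcard]; omega
    have h1 := Polynomial.coeff_eq_esymm_roots_of_card hcard' hkle
    have h2 : Pm.natDegree - (n - (i.1+1)) = i.1 + 1 := by rw [hcard]; omega
    rw [h2, hleadm] at h1
    have h3 : Pm.coeff (n - (i.1+1)) = (P.coeff (n - (i.1+1)) : ℂ) := by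
      rw [hPm, Polynomial.coeff_map]; rfl
    have hsq : ((-1 : ℂ) ^ (i.1+1)) * ((-1 : ℂ) ^ (i.1+1)) = 1 := by
      rw [← mul_pow]; norm_num
    calc (P.leadingCoeff : ℂ) * v i
        = ((-1:ℂ) ^ (i.1+1)) * (((-1:ℂ) ^ (i.1+1)) * ((P.leadingCoeff : ℂ) * v i)) := by
          rw [← mul_assoc, hsq, one_mul]
      _ = ((-1:ℂ) ^ (i.1+1)) * (P.coeff (n - (i.1+1)) : ℂ) := by
          rw [← h3, h1, hv]; ring
  have hfun : (fun i : Fin n => aeval α (esymm (Fin n) ℤ (i.1 + 1))) = v := by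
    funext i
    rw [aeval_esymm_eq_multiset_esymm, ← hroots]
  have hval : aeval α G = aeval v q := by
    rw [← hq, MvPolynomial.comp_aeval_apply, hfun]
  have hrepr : aeval v q = ∑ t ∈ q.support, ((MvPolynomial.coeff t q : ℤ) : ℂ) * ∏ i, v i ^ t i := by
    rw [MvPolynomial.aeval_def, eval₂_eq']
    simp only [algebraMap_int_eq, Int.coe_castRingHom]
  refine ⟨∑ t ∈ q.support, MvPolynomial.coeff t q * P.leadingCoeff ^ (d - ∑ i, t i) *
      ∏ i, ((-1) ^ (i.1+1) * P.coeff (n - (i.1+1))) ^ (t i), ?_⟩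
  rw [hval, hrepr, Finset.mul_sum]
  simp only [Int.cast_sum, Int.cast_mul, Int.cast_prod, Int.cast_pow, Int.cast_neg, Int.cast_one]
  apply Finset.sum_congr rfl
  intro t ht
  have hwt := hw t ht
  have hfact : ∏ i, ((-1:ℂ) ^ (i.1+1) * (P.coeff (n - (i.1+1)) : ℂ)) ^ t i
      = (P.leadingCoeff : ℂ) ^ (∑ i, t i) * ∏ i, v i ^ t i := by
    rw [← Finset.prod_pow_eq_pow_sum, ← Finset.prod_mul_distrib]
    apply Finset.prod_congr rfl
    intro i _
    rw [← mul_pow, hKey i]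
  calc ((MvPolynomial.coeff t q : ℤ) : ℂ) * (P.leadingCoeff : ℂ) ^ (d - ∑ i, t i) *
        ∏ i, ((-1:ℂ) ^ (i.1+1) * (P.coeff (n - (i.1+1)) : ℂ)) ^ t i
      = ((MvPolynomial.coeff t q : ℤ) : ℂ) *
          ((P.leadingCoeff : ℂ) ^ (d - ∑ i, t i) * (P.leadingCoeff : ℂ) ^ (∑ i, t i)) *
          ∏ i, v i ^ t i := by
        rw [hfact]; ring
    _ = (P.leadingCoeff : ℂ) ^ d * (((MvPolynomial.coeff t q : ℤ) : ℂ) * ∏ i, v i ^ t i) := by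
        rw [← pow_add, Nat.sub_add_cancel hwt]; ring

lemma exists_int_eq_prod {n : ℕ} (hn : 0 < n) (P : Polynomial ℤ)
    (hcard : (P.map (Int.castRingHom ℂ)).natDegree = n)
    (α : Fin n → ℂ)
    (hroots : (P.map (Int.castRingHom ℂ)).roots = (Finset.univ.val : Multiset (Fin n)).map α) :
    ∃ z : ℤ, (z : ℂ) = ((P.leadingCoeff : ℂ)) ^ (2 * n) *
      ∏ p ∈ Finset.univ.offDiag, (α p.1 - α p.2) := by
  classical
  set G : MvPolynomial (Fin n) ℤ := ∏ p ∈ Finset.univ.offDiag, (X p.1 - X p.2) with hG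
  have hsym : G.IsSymmetric := by
    intro e
    rw [hG, map_prod]
    simp only [map_sub, rename_X]
    refine Finset.prod_bij' (fun p _ => (e p.1, e p.2)) (fun p _ => (e.symm p.1, e.symm p.2))
      ?_ ?_ ?_ ?_ ?_
    · intro p hp
      simp only [Finset.mem_offDiag, Finset.mem_univ, true_and] at hp ⊢
      exact fun h => hp (e.injective h)
    · intro p hp
      simp only [Finset.mem_offDiag, Finset.mem_univ, true_and] at hp ⊢
      exact fun h => hp (e.symm.injective h)
    · intro p hp; simp
    · intro p hp; simp
    · intro p hp; rfl
  have hdeg : ∀ j, degreeOf j G ≤ 2 * n := by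
    intro j
    rw [hG]
    refine (degreeOf_prod_le _ _ _).trans ?_
    have hfac : ∀ p : Fin n × Fin n, degreeOf j (X p.1 - X p.2 : MvPolynomial (Fin n) ℤ)
        ≤ (if p.1 = j then 1 else 0) + (if p.2 = j then 1 else 0) := by
      intro p
      refine (degreeOf_sub_le _ _ _).trans ?_
      have h1 : degreeOf j (X p.1 : MvPolynomial (Fin n) ℤ) = if p.1 = j then 1 else 0 := by
        rw [degreeOf_X]; split <;> simp_all [eq_comm]
      have h2 : degreeOf j (X p.2 : MvPolynomial (Fin n) ℤ) = if p.2 = j then 1 else 0 := by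
        rw [degreeOf_X]; split <;> simp_all [eq_comm]
      rw [h1, h2]
      exact max_le (by omega) (by omega)
    calc ∑ p ∈ univ.offDiag, degreeOf j (X p.1 - X p.2 : MvPolynomial (Fin n) ℤ)
        ≤ ∑ p ∈ univ.offDiag, ((if p.1 = j then 1 else 0) + (if p.2 = j then 1 else 0)) :=
          Finset.sum_le_sum (fun p _ => hfac p)
      _ ≤ ∑ p ∈ univ ×ˢ univ, ((if p.1 = j then 1 else 0) + (if p.2 = j then 1 else 0)) :=
          Finset.sum_le_sum_of_subset (by
            intro p hp
            simp only [Finset.mem_offDiag, Finset.mem_univ, true_and] at hp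
            simp [Finset.mem_product])
      _ ≤ 2 * n := by
          rw [Finset.sum_product]
          have hA : ∀ x : Fin n, (∑ y : Fin n, ((if x = j then 1 else 0) + (if y = j then 1 else 0)))
              = (n * if x = j then 1 else 0) + 1 := by
            intro x
            rw [Finset.sum_add_distrib, Finset.sum_const, Finset.card_univ]
            simp [Finset.sum_ite_eq']
          rw [Finset.sum_congr rfl fun x _ => hA x, Finset.sum_add_distrib, Finset.sum_const,
            Finset.card_univ, ← Finset.mul_sum]
          simp [Finset.sum_ite_eq']
          omega
  obtain ⟨z, hz⟩ := exists_int_eq hn P hcard α hroots G hsym hdeg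
  refine ⟨z, ?_⟩
  rw [hz, hG, map_prod]
  simp only [map_sub, MvPolynomial.aeval_X]

lemma neg_log_one_sub_le {x : ℝ} (h0 : 0 ≤ x) (h2 : x ≤ 1/2) :
    - Real.log (1 - x) ≤ 2 * x := by
  have hx1 : 0 < 1 - x := by linarith
  have h1 : Real.exp (-(2*x)) ≤ 1 - x := by
    have hb : 1 + 2*x ≤ Real.exp (2*x) := by
      linarith [Real.add_one_le_exp (2*x)]
    have hpos : (0:ℝ) < 1 + 2*x := by linarith
    have : Real.exp (-(2*x)) = (Real.exp (2*x))⁻¹ := by rw [Real.exp_neg]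
    rw [this]
    have h3 : (Real.exp (2*x))⁻¹ ≤ (1 + 2*x)⁻¹ := by
      apply inv_anti₀ hpos hb
    refine h3.trans ?_
    rw [inv_le_iff_one_le_mul₀ hpos] -- maybe wrong name
    nlinarith
  have := Real.log_le_log (Real.exp_pos _) h1
  rw [Real.log_exp] at this
  linarith

lemma diag_bound {a : ℂ} (ha : ‖a‖ ≤ 1) {t : ℝ} (ht0 : 0 ≤ t) (ht1 : t < 1) :
    - Real.log (‖1 - t * a * (starRingEnd ℂ) a‖) ≤ - Real.log (1 - t) := by
  have key : 1 - t ≤ ‖1 - t * a * (starRingEnd ℂ) a‖ := by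
    have h1 : (t * a * (starRingEnd ℂ) a : ℂ) = ((t * Complex.normSq a : ℝ) : ℂ) := by
      rw [mul_assoc, Complex.mul_conj]
      push_cast; ring
    rw [h1, ← Complex.ofReal_one, ← Complex.ofReal_sub, Complex.norm_real, Real.norm_eq_abs]
    have hna : Complex.normSq a ≤ 1 := by
      have := Complex.sq_norm a ▸ (by nlinarith [norm_nonneg a] : (‖a‖)^2 ≤ 1)
      linarith [this]
    have h2 : t * Complex.normSq a ≤ t := by
      nlinarith [Complex.normSq_nonneg a]
    rw [abs_of_nonneg (by nlinarith)]
    linarith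
  have h1t : (0:ℝ) < 1 - t := by linarith
  have := Real.log_le_log h1t key
  linarith

lemma pair_bound {a b : ℂ} (ha : ‖a‖ ≤ 1) (hb : ‖b‖ ≤ 1)
    {t : ℝ} (ht0 : 0 < t) (ht1 : t ≤ 1) (hab : a ≠ b) :
    - Real.log (‖1 - t * a * (starRingEnd ℂ) b‖) ≤
      - (1/2) * Real.log t - Real.log (‖a - b‖) := by
  have hA : Complex.normSq a ≤ 1 := by
    rw [← Complex.sq_norm]; nlinarith [norm_nonneg a]
  have hB : Complex.normSq b ≤ 1 := by
    rw [← Complex.sq_norm]; nlinarith [norm_nonneg b]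
  have hid : Complex.normSq (1 - t * a * (starRingEnd ℂ) b) - t * Complex.normSq (a - b)
      = (1 - t * Complex.normSq a) * (1 - t * Complex.normSq b) := by
    simp only [Complex.normSq_apply, Complex.sub_re, Complex.sub_im, Complex.mul_re,
      Complex.mul_im, Complex.one_re, Complex.one_im, Complex.conj_re, Complex.conj_im,
      Complex.ofReal_re, Complex.ofReal_im]
    ring
  have hkey2 : t * Complex.normSq (a - b) ≤ Complex.normSq (1 - t * a * (starRingEnd ℂ) b) := by
    have h1 : 0 ≤ 1 - t * Complex.normSq a := by nlinarith [Complex.normSq_nonneg a]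
    have h2 : 0 ≤ 1 - t * Complex.normSq b := by nlinarith [Complex.normSq_nonneg b]
    nlinarith [mul_nonneg h1 h2]
  have habpos : 0 < ‖a - b‖ := by
    simpa [norm_pos_iff, sub_eq_zero] using hab
  have hkey : Real.sqrt t * ‖a - b‖ ≤ ‖1 - t * a * (starRingEnd ℂ) b‖ := by
    have h1 := Real.sqrt_le_sqrt hkey2
    rwa [Real.sqrt_mul ht0.le, ← Complex.norm_def, ← Complex.norm_def] at h1
  have hstpos : 0 < Real.sqrt t * ‖a - b‖ := by positivity
  have hlog := Real.log_le_log hstpos hkey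
  rw [Real.log_mul (by positivity) habpos.ne', Real.log_sqrt ht0.le] at hlog
  linarith

lemma energy_lower {n : ℕ} (α : Fin n → ℂ) (habs : ∀ i, ‖α i‖ ≤ 1)
    {t : ℝ} (ht0 : 0 < t) (ht1 : t < 1) (m : ℕ) (hm : 1 ≤ m) :
    t ^ m * (‖∑ i, α i ^ m‖) ^ 2 / m ≤
      ∑ i, ∑ j, (- Real.log (‖1 - t * α i * (starRingEnd ℂ) (α j)‖)) := by
  classical
  set u : Fin n → Fin n → ℂ := fun i j => (t : ℝ) * α i * (starRingEnd ℂ) (α j) with hu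
  have hnorm : ∀ i j, ‖u i j‖ < 1 := by
    intro i j
    have h1 : ‖u i j‖ = t * (‖α i‖ * ‖α j‖) := by
      simp only [hu, norm_mul, Complex.norm_conj,
        Complex.norm_real, Real.norm_eq_abs, mul_assoc, abs_of_pos ht0]
    rw [h1]
    have h2 : ‖α i‖ * ‖α j‖ ≤ 1 := by
      nlinarith [norm_nonneg (α i), norm_nonneg (α j), habs i, habs j]
    nlinarith [norm_nonneg (α i), norm_nonneg (α j)]
  have hs1 : ∀ i j, HasSum (fun k : ℕ => ((u i j) ^ k / k).re)
      (- Real.log (‖1 - u i j‖)) := by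
    intro i j
    have h := Complex.hasSum_taylorSeries_neg_log (hnorm i j)
    have h2 := h.mapL Complex.reCLM
    simpa [Complex.log_re] using h2
  have hs2 : HasSum (fun k : ℕ => ∑ i, ∑ j, ((u i j) ^ k / k).re)
      (∑ i, ∑ j, - Real.log (‖1 - u i j‖)) :=
    hasSum_sum (fun i _ => hasSum_sum (fun j _ => hs1 i j))
  have hterm : (fun k : ℕ => ∑ i, ∑ j, ((u i j) ^ k / k).re)
      = fun k : ℕ => t ^ k * (‖∑ i, α i ^ k‖) ^ 2 / k := by
    funext k
    have expand : ∑ i, ∑ j, (u i j) ^ k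
        = ((t:ℂ)) ^ k * ((∑ i, α i ^ k) * (starRingEnd ℂ) (∑ i, α i ^ k)) := by
      rw [map_sum, Finset.sum_mul_sum, Finset.mul_sum]
      congr 1; funext i
      rw [Finset.mul_sum]
      apply Finset.sum_congr rfl
      intro j _
      simp only [hu, mul_pow, map_pow]
      ring
    have e2 : ∑ i, ∑ j, ((u i j) ^ k / k : ℂ)
        = ((t ^ k * (‖∑ i, α i ^ k‖) ^ 2 / k : ℝ) : ℂ) := by
      simp only [← Finset.sum_div]
      rw [expand, Complex.mul_conj, ← Complex.sq_norm]
      push_cast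
      ring
    calc ∑ i, ∑ j, ((u i j) ^ k / k).re = (∑ i, ∑ j, ((u i j) ^ k / k : ℂ)).re := by
          simp only [Complex.re_sum]
      _ = t ^ k * (‖∑ i, α i ^ k‖) ^ 2 / k := by rw [e2, Complex.ofReal_re]
  rw [hterm] at hs2
  refine le_hasSum hs2 m (fun k _ => by positivity)

end Stmt10Aux

open Stmt10Aux Finset MvPolynomial in
set_option maxHeartbeats 1000000 in
set_option maxHeartbeats 1000000 in
theorem stmt10 (M : ℝ) (hM : 0 < M) (n : ℕ) (hnM : M ≤ (n : ℝ)) (hn : 55 ≤ n)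
    (m : ℕ) (hm : 1 ≤ m)
    (P : Polynomial ℤ)
    (hdeg : P.degree = n)
    (hlead : (|P.leadingCoeff| : ℝ) ≤ M)
    (hsimple : (P.map (Int.castRingHom ℂ)).roots.Nodup)
    (hzeros : ∀ z ∈ (P.map (Int.castRingHom ℂ)).roots, ‖z‖ ≤ 1) :
    ‖((P.map (Int.castRingHom ℂ)).roots.map (fun z => z ^ m)).sum‖
      ≤ (24 * m + 16) * Real.sqrt (n * Real.log n) := by
  classical
  have hint : Function.Injective ((Int.castRingHom ℂ) : ℤ →+* ℂ) := by
    intro a b h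
    simp only [Int.coe_castRingHom] at h
    exact_mod_cast h
  set Pm := P.map (Int.castRingHom ℂ) with hPm
  have hP0 : P ≠ 0 := by
    intro h; rw [h] at hdeg; simp only [degree_zero] at hdeg
    exact absurd hdeg (by
      intro hh
      have : ((n:ℕ) : WithBot ℕ) ≠ ⊥ := by simp
      exact this hh.symm)
  have hlc0 : P.leadingCoeff ≠ 0 := Polynomial.leadingCoeff_ne_zero.mpr hP0
  have hdegm : Pm.degree = n := by
    rw [hPm, Polynomial.degree_map_eq_of_injective hint, hdeg]
  have hndm : Pm.natDegree = n := Polynomial.natDegree_eq_of_degree_eq_some hdegm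
  have hcardroots : Multiset.card Pm.roots = n := by
    have hsp : Pm.Splits := IsAlgClosed.splits Pm
    rw [← hndm]
    exact Polynomial.splits_iff_card_roots.mp hsp
  -- enumerate the roots
  obtain ⟨α, hroots⟩ : ∃ α : Fin n → ℂ, Pm.roots = (Finset.univ.val : Multiset (Fin n)).map α := by
    have hlen : Pm.roots.toList.length = n := by rw [Multiset.length_toList, hcardroots]
    refine ⟨fun i => Pm.roots.toList.get (Fin.cast hlen.symm i), ?_⟩
    have h2 : (Finset.univ.val : Multiset (Fin n)) = ↑(List.finRange n) := rfl
    rw [h2]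
    have h3 : Multiset.map (fun i => Pm.roots.toList.get (Fin.cast hlen.symm i))
        ↑(List.finRange n)
        = ↑((List.finRange n).map (fun i => Pm.roots.toList.get (Fin.cast hlen.symm i))) := rfl
    rw [h3, ← List.ofFn_eq_map]
    have h4 : List.ofFn (fun i : Fin n => Pm.roots.toList.get (Fin.cast hlen.symm i))
        = Pm.roots.toList := by
      apply List.ext_get (by simp [hlen])
      intro i h1 h2
      simp [List.get_ofFn]
    rw [h4, Multiset.coe_toList]
  have habs1 : ∀ i, ‖α i‖ ≤ 1 := by
    intro i
    apply hzeros
    rw [hroots]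
    exact Multiset.mem_map.mpr ⟨i, by simp, rfl⟩
  have hinj : ∀ i j : Fin n, i ≠ j → α i ≠ α j := by
    rw [hroots] at hsimple
    intro i j hij heq
    exact hij (Multiset.inj_on_of_nodup_map hsimple i (by simp) j (by simp) heq)
  have hsum_eq : ((Pm.roots).map (fun z => z ^ m)).sum = ∑ i, α i ^ m := by
    rw [hroots, Multiset.map_map]
    rfl
  rw [hsum_eq]
  set N := (n:ℝ) with hNdef
  have hN55 : (55:ℝ) ≤ N := by rw [hNdef]; exact_mod_cast hn
  have hNpos : (0:ℝ) < N := by linarith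
  have hlog1 : (1:ℝ) ≤ Real.log N := by
    rw [Real.le_log_iff_exp_le hNpos]
    have := Real.exp_one_lt_d9
    linarith
  have hNlogN : N ≤ N * Real.log N := by nlinarith
  have hsqrtNN : Real.sqrt N ≤ Real.sqrt (N * Real.log N) := Real.sqrt_le_sqrt hNlogN
  have htriv : ‖∑ i, α i ^ m‖ ≤ N := by
    have h1 := norm_sum_le (Finset.univ) (fun i => α i ^ m)
    refine h1.trans ?_
    have h2 : ∀ i : Fin n, ‖α i ^ m‖ ≤ 1 := by
      intro i
      rw [norm_pow]
      exact pow_le_one₀ (norm_nonneg _) (habs1 i)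
    calc ∑ i, ‖α i ^ m‖ ≤ ∑ _i : Fin n, (1:ℝ) := Finset.sum_le_sum (fun i _ => h2 i)
      _ = N := by simp [hNdef]
  by_cases hcase : Real.sqrt N ≤ 24 * m + 16
  · calc ‖∑ i, α i ^ m‖ ≤ N := htriv
      _ = Real.sqrt N * Real.sqrt N := (Real.mul_self_sqrt hNpos.le).symm
      _ ≤ (24 * m + 16) * Real.sqrt N :=
          mul_le_mul_of_nonneg_right hcase (Real.sqrt_nonneg _)
      _ ≤ (24 * m + 16) * Real.sqrt (N * Real.log N) :=
          mul_le_mul_of_nonneg_left hsqrtNN (by positivity)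
  · push_neg at hcase
    have hsN : Real.sqrt N ≤ N := by
      nlinarith [Real.sq_sqrt hNpos.le, Real.sqrt_nonneg N]
    have hm24 : 24 * (m:ℝ) ≤ Real.sqrt N := by linarith
    -- bound on leading coefficient
    have haR1 : (1:ℝ) ≤ |(P.leadingCoeff : ℝ)| := by
      have h1 : (1:ℤ) ≤ |P.leadingCoeff| := Int.one_le_abs hlc0
      have h2 : ((1:ℤ):ℝ) ≤ ((|P.leadingCoeff| : ℤ) : ℝ) := by exact_mod_cast h1
      rwa [Int.cast_abs, Int.cast_one] at h2
    have haRN : |(P.leadingCoeff : ℝ)| ≤ N := le_trans hlead hnM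
    have haRpos : (0:ℝ) < |(P.leadingCoeff : ℝ)| := by linarith
    -- lower bound for the product of root differences
    obtain ⟨z, hz⟩ := exists_int_eq_prod (by omega) P hndm α hroots
    have hrhs0 : ((P.leadingCoeff : ℂ)) ^ (2*n) *
        ∏ p ∈ Finset.univ.offDiag, (α p.1 - α p.2) ≠ 0 := by
      apply mul_ne_zero
      · apply pow_ne_zero
        exact_mod_cast hlc0
      · rw [Finset.prod_ne_zero_iff]
        intro p hp
        rw [Finset.mem_offDiag] at hp
        exact sub_ne_zero.mpr (hinj _ _ hp.2.2)
    have hzne : z ≠ 0 := by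
      intro h
      rw [h] at hz
      exact hrhs0 (by rw [← hz]; simp)
    have hprodlb : (1:ℝ) ≤ |(P.leadingCoeff : ℝ)| ^ (2*n) *
        ∏ p ∈ Finset.univ.offDiag, ‖α p.1 - α p.2‖ := by
      have h1 : (1:ℝ) ≤ ‖((z:ℤ) : ℂ)‖ := by
        rw [Complex.norm_intCast]
        exact_mod_cast Int.one_le_abs hzne
      rw [hz, norm_mul, norm_pow, norm_prod] at h1
      rwa [Complex.norm_intCast] at h1
    have hdiffpos : ∀ p ∈ Finset.univ.offDiag (α := Fin n),
        0 < ‖α p.1 - α p.2‖ := by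
      intro p hp
      rw [Finset.mem_offDiag] at hp
      exact norm_pos_iff.mpr (sub_ne_zero.mpr (hinj _ _ hp.2.2))
    have hW : ∑ p ∈ Finset.univ.offDiag,
        (- Real.log (‖α p.1 - α p.2‖)) ≤ 2 * (N * Real.log N) := by
      have h0 : 0 ≤ Real.log (|(P.leadingCoeff : ℝ)| ^ (2*n) *
          ∏ p ∈ Finset.univ.offDiag, ‖α p.1 - α p.2‖) :=
        Real.log_nonneg hprodlb
      have hprodpos : 0 < ∏ p ∈ Finset.univ.offDiag, ‖α p.1 - α p.2‖ :=
        Finset.prod_pos hdiffpos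
      rw [Real.log_mul (by positivity) hprodpos.ne', Real.log_pow,
        Real.log_prod (fun p hp => (hdiffpos p hp).ne')] at h0
      have hla : Real.log |(P.leadingCoeff : ℝ)| ≤ Real.log N :=
        Real.log_le_log haRpos haRN
      have hsum : ∑ p ∈ Finset.univ.offDiag, (- Real.log (‖α p.1 - α p.2‖))
          = - ∑ p ∈ Finset.univ.offDiag, Real.log (‖α p.1 - α p.2‖) := by
        rw [Finset.sum_neg_distrib]
      rw [hsum]
      have h2n : ((2*n : ℕ):ℝ) = 2 * N := by push_cast [hNdef]; ring
      have hlogN0 : 0 ≤ Real.log N := by linarith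
      nlinarith [h0, hla, hlogN0]
    -- energy estimates
    obtain ⟨t, htdef⟩ : ∃ t : ℝ, t = 1 - 1/N := ⟨_, rfl⟩
    have hinvN : 0 < 1/N := by positivity
    have hinvN2 : 1/N ≤ 1/2 := by
      rw [div_le_div_iff₀ hNpos (by norm_num)]
      linarith
    have ht0 : 0 < t := by rw [htdef]; linarith
    have ht1 : t < 1 := by rw [htdef]; linarith
    have hE := energy_lower α habs1 ht0 ht1 m hm
    have hlogt : - Real.log t ≤ 2 / N := by
      have := neg_log_one_sub_le hinvN.le hinvN2
      rw [htdef]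
      calc - Real.log (1 - 1/N) ≤ 2 * (1/N) := this
        _ = 2 / N := by ring
    have hlogt' : -(1/2) * Real.log t ≤ 1/N := by
      have h := hlogt
      rw [show (2:ℝ)/N = 2*(1/N) by ring] at h
      linarith
    have hEbound : ∑ i, ∑ j,
        (- Real.log (‖1 - t * α i * (starRingEnd ℂ) (α j)‖)) ≤
        4 * (N * Real.log N) := by
      rw [← Finset.sum_product']
      rw [← Finset.diag_union_offDiag (Finset.univ : Finset (Fin n))]
      rw [Finset.sum_union (Finset.disjoint_diag_offDiag _)]
      have hdiag : ∑ p ∈ (Finset.univ : Finset (Fin n)).diag,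
          (- Real.log (‖1 - t * α p.1 * (starRingEnd ℂ) (α p.2)‖))
          ≤ N * Real.log N := by
        rw [Finset.sum_diag]
        have hterm : ∀ i : Fin n,
            - Real.log (‖1 - t * α i * (starRingEnd ℂ) (α i)‖) ≤ Real.log N := by
          intro i
          refine (diag_bound (habs1 i) ht0.le ht1).trans ?_
          have h1t : (1:ℝ) - t = 1/N := by rw [htdef]; ring
          rw [h1t, one_div, Real.log_inv]
          linarith
        calc ∑ i, (- Real.log (‖1 - t * α i * (starRingEnd ℂ) (α i)‖))
            ≤ ∑ _i : Fin n, Real.log N := Finset.sum_le_sum (fun i _ => hterm i)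
          _ = N * Real.log N := by
              rw [Finset.sum_const, Finset.card_univ, Fintype.card_fin, nsmul_eq_mul, hNdef]
      have hoff : ∑ p ∈ (Finset.univ : Finset (Fin n)).offDiag,
          (- Real.log (‖1 - t * α p.1 * (starRingEnd ℂ) (α p.2)‖))
          ≤ N + 2 * (N * Real.log N) := by
        have hterm : ∀ p ∈ (Finset.univ : Finset (Fin n)).offDiag,
            - Real.log (‖1 - t * α p.1 * (starRingEnd ℂ) (α p.2)‖) ≤
            1/N + (- Real.log (‖α p.1 - α p.2‖)) := by
          intro p hp
          rw [Finset.mem_offDiag] at hp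
          refine (pair_bound (habs1 p.1) (habs1 p.2) ht0 ht1.le (hinj _ _ hp.2.2)).trans ?_
          linarith [hlogt']
        calc ∑ p ∈ (Finset.univ : Finset (Fin n)).offDiag,
            (- Real.log (‖1 - t * α p.1 * (starRingEnd ℂ) (α p.2)‖))
            ≤ ∑ p ∈ (Finset.univ : Finset (Fin n)).offDiag,
              (1/N + (- Real.log (‖α p.1 - α p.2‖))) :=
              Finset.sum_le_sum hterm
          _ = ((Finset.univ : Finset (Fin n)).offDiag.card : ℝ) * (1/N) +
              ∑ p ∈ Finset.univ.offDiag, (- Real.log (‖α p.1 - α p.2‖)) := by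
              rw [Finset.sum_add_distrib, Finset.sum_const, nsmul_eq_mul]
          _ ≤ N + 2 * (N * Real.log N) := by
              have hcard : ((Finset.univ : Finset (Fin n)).offDiag.card : ℝ) ≤ N^2 := by
                rw [Finset.offDiag_card, Finset.card_univ, Fintype.card_fin]
                have hnn : n ≤ n * n := Nat.le_mul_of_pos_left n (by omega)
                rw [Nat.cast_sub hnn]
                push_cast
                nlinarith [hNpos]
              have h1 : ((Finset.univ : Finset (Fin n)).offDiag.card : ℝ) * (1/N) ≤ N := by
                rw [mul_one_div, div_le_iff₀ hNpos]
                nlinarith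
              linarith [hW]
      calc ∑ p ∈ (Finset.univ : Finset (Fin n)).diag,
            (- Real.log (‖1 - t * α p.1 * (starRingEnd ℂ) (α p.2)‖))
          + ∑ p ∈ (Finset.univ : Finset (Fin n)).offDiag,
            (- Real.log (‖1 - t * α p.1 * (starRingEnd ℂ) (α p.2)‖))
          ≤ N * Real.log N + (N + 2 * (N * Real.log N)) := add_le_add hdiag hoff
        _ ≤ 4 * (N * Real.log N) := by nlinarith
    -- conclude
    have key : t ^ m * (‖∑ i, α i ^ m‖) ^ 2 / m ≤ 4 * (N * Real.log N) :=
      hE.trans hEbound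
    have hmpos : (0:ℝ) < m := by exact_mod_cast hm
    have htminv : (1/t) ^ m ≤ 4 := by
      have hN1 : (0:ℝ) < N - 1 := by linarith
      have hx : 1/t = 1 + 1/(N-1) := by
        rw [htdef]
        field_simp
        ring
      have hxm : (m:ℝ) * (1/(N-1)) ≤ 1 := by
        rw [mul_one_div, div_le_one hN1]
        nlinarith [hm24, hsN]
      calc (1/t)^m = (1 + 1/(N-1))^m := by rw [hx]
        _ ≤ (Real.exp (1/(N-1)))^m := by
            apply pow_le_pow_left₀ (by positivity)
            linarith [Real.add_one_le_exp (1/(N-1))]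
        _ = Real.exp ((m:ℝ) * (1/(N-1))) := by
            rw [← Real.exp_nat_mul]
        _ ≤ Real.exp 1 := Real.exp_le_exp.mpr hxm
        _ ≤ 4 := by linarith [Real.exp_one_lt_d9]
    have habs2 : (‖∑ i, α i ^ m‖) ^ 2 ≤ 16 * m * (N * Real.log N) := by
      have htm : (0:ℝ) < t ^ m := pow_pos ht0 m
      have h2 : t ^ m * (‖∑ i, α i ^ m‖) ^ 2 ≤ 4 * (N * Real.log N) * m := by
        rw [div_le_iff₀ hmpos] at key
        linarith
      have hprodone : t ^ m * (1/t) ^ m = 1 := by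
        rw [← mul_pow, mul_one_div_cancel ht0.ne', one_pow]
      have heq : (‖∑ i, α i ^ m‖) ^ 2
          = (t ^ m * (‖∑ i, α i ^ m‖) ^ 2) * (1/t) ^ m := by
        field_simp
        rw [mul_assoc, hprodone, mul_one]
      rw [heq]
      calc (t ^ m * (‖∑ i, α i ^ m‖) ^ 2) * (1/t) ^ m
          ≤ (4 * (N * Real.log N) * m) * (1/t) ^ m := by
            apply mul_le_mul_of_nonneg_right h2 (by positivity)
        _ ≤ (4 * (N * Real.log N) * m) * 4 := by
            apply mul_le_mul_of_nonneg_left htminv (by positivity)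
        _ = 16 * m * (N * Real.log N) := by ring
    have hAnn : 0 ≤ ‖∑ i, α i ^ m‖ := norm_nonneg _
    calc ‖∑ i, α i ^ m‖
        = Real.sqrt ((‖∑ i, α i ^ m‖)^2) := (Real.sqrt_sq hAnn).symm
      _ ≤ Real.sqrt (16 * m * (N * Real.log N)) := Real.sqrt_le_sqrt habs2
      _ ≤ Real.sqrt ((24 * m + 16)^2 * (N * Real.log N)) := by
          apply Real.sqrt_le_sqrt
          have hNlnn : (0:ℝ) ≤ N * Real.log N := by positivity
          nlinarith [hmpos, hNlnn]
      _ = (24 * m + 16) * Real.sqrt (N * Real.log N) := by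
          rw [Real.sqrt_mul (by positivity), Real.sqrt_sq (by positivity)]
end

section
/- Let [a,b] ⊂ ℝ with b − a ≥ 4. Then every nonzero polynomial P ∈ ℤ[x] satisfies ‖P‖_{[a,b]} ≥ 1; consequently the integer Chebyshev constant satisfies t_ℤ([a,b]) = 1. -/
open Filter Polynomial

/-- The uniform (sup) norm of an integer polynomial on the segment `[a,b]`. -/
noncomputable def supNorm (a b : ℝ) (f : Polynomial ℤ) : ℝ :=
  sSup ((fun x => |(f.map (Int.castRingHom ℝ)).eval x|) '' Set.Icc a b)

/-- The integer Chebyshev constant of the segment `[a,b]`. -/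
noncomputable def intChebyshev (a b : ℝ) : ℝ :=
  limsup (fun m : ℕ =>
    (sInf {r : ℝ | ∃ R : Polynomial ℤ, R ≠ 0 ∧ R.natDegree ≤ m ∧ r = supNorm a b R})
      ^ ((m : ℝ)⁻¹)) atTop

lemma chebDegLe : ∀ n : ℕ, (Chebyshev.T ℝ n).natDegree ≤ n
  | 0 => by simp [Chebyshev.T_zero]
  | 1 => by simp [Chebyshev.T_one]
  | (n+2) => by
    have h1 := chebDegLe (n+1)
    have h0 := chebDegLe n
    rw [show ((n+2:ℕ):ℤ) = (n:ℤ)+2 by push_cast; ring, Chebyshev.T_add_two]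
    refine le_trans (natDegree_sub_le _ _) (max_le ?_ ?_)
    · refine le_trans (natDegree_mul_le) ?_
      have : (2 * X : ℝ[X]).natDegree ≤ 1 := by
        refine le_trans natDegree_mul_le ?_
        simp
      push_cast at h1
      omega
    · omega

lemma chebCoeff : ∀ n : ℕ, (Chebyshev.T ℝ (n+1:ℕ)).coeff (n+1) = 2^n
  | 0 => by simp [Chebyshev.T_one]
  | 1 => by
    rw [show ((1+1:ℕ):ℤ) = 2 by norm_num, Chebyshev.T_two]
    simp [coeff_sub, coeff_X_pow, coeff_ofNat_succ, coeff_one]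
  | (n+2) => by
    have h1 := chebCoeff (n+1)
    have h0 := chebDegLe (n+1)
    rw [show ((n+2+1:ℕ):ℤ) = ((n+1:ℕ):ℤ)+2 by push_cast; ring, Chebyshev.T_add_two]
    rw [coeff_sub, mul_assoc, coeff_ofNat_mul, show (n+2+1) = (n+1+1)+1 by ring, coeff_X_mul]
    rw [show ((n+1:ℕ):ℤ)+1 = ((n+1+1:ℕ):ℤ) by push_cast; ring, h1]
    rw [coeff_eq_zero_of_natDegree_lt (by omega : (Chebyshev.T ℝ (n+1:ℕ)).natDegree < n+1+1+1)]
    ring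

lemma chebCoeff' (n : ℕ) (hn : 1 ≤ n) : (Chebyshev.T ℝ n).coeff n = 2^(n-1) := by
  cases n with
  | zero => omega
  | succ k => simpa using chebCoeff k

lemma chebDeg (n : ℕ) (hn : 1 ≤ n) : (Chebyshev.T ℝ n).natDegree = n :=
  le_antisymm (chebDegLe n) (le_natDegree_of_ne_zero (by rw [chebCoeff' n hn]; positivity))

lemma chebLead (n : ℕ) (hn : 1 ≤ n) : (Chebyshev.T ℝ n).leadingCoeff = 2^(n-1) := by
  rw [leadingCoeff, chebDeg n hn, chebCoeff' n hn]

lemma eval_le_supNorm (a b : ℝ) (hab : a ≤ b) (P : Polynomial ℤ) {x : ℝ}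
    (hx : x ∈ Set.Icc a b) : |(P.map (Int.castRingHom ℝ)).eval x| ≤ supNorm a b P := by
  apply le_csSup
  · exact (isCompact_Icc.image (continuous_abs.comp (Polynomial.continuous _))).bddAbove
  · exact ⟨x, hx, rfl⟩

lemma keyPos (a b : ℝ) (hlen : 4 ≤ b - a) (P : Polynomial ℤ)
    (hpos : 0 < P.leadingCoeff) : 1 ≤ supNorm a b P := by
  by_contra hsup
  push_neg at hsup
  have hab : a ≤ b := by linarith
  have hinj : Function.Injective (Int.castRingHom ℝ) := Int.cast_injective
  set p : ℝ[X] := P.map (Int.castRingHom ℝ) with hp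
  have hlt : ∀ x ∈ Set.Icc a b, |p.eval x| < 1 :=
    fun x hx => lt_of_le_of_lt (eval_le_supNorm a b hab P hx) hsup
  have hpdeg : p.natDegree = P.natDegree := natDegree_map_eq_of_injective hinj P
  set c : ℝ := p.leadingCoeff with hcdef
  have hc1 : 1 ≤ c := by
    have hlc := leadingCoeff_map_of_injective hinj P
    rw [← hp] at hlc
    rw [hcdef, hlc, eq_intCast]
    exact_mod_cast hpos
  set n := P.natDegree with hn
  rcases Nat.eq_zero_or_pos n with h0 | hn1
  · have hx := hlt a ⟨le_refl a, hab⟩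
    have hd0 : p.natDegree = 0 := by omega
    have hpc : p = C (p.coeff 0) := eq_C_of_natDegree_eq_zero hd0
    have hcc : c = p.coeff 0 := by rw [hcdef, leadingCoeff, hd0]
    rw [hpc, eval_C, ← hcc, abs_of_pos (by linarith)] at hx
    linarith
  set m := (a + b) / 2 with hm
  set x : ℕ → ℝ := fun j => m + 2 * Real.cos (j * Real.pi / n) with hx
  have hpi := Real.pi_pos
  have hn0 : (0:ℝ) < n := by exact_mod_cast hn1
  have hxmem : ∀ j : ℕ, x j ∈ Set.Icc a b := by
    intro j
    have h1 := Real.neg_one_le_cos (j * Real.pi / n)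
    have h2 := Real.cos_le_one (j * Real.pi / n)
    constructor <;> simp only [hx] <;> nlinarith
  have hxanti : ∀ i j : ℕ, i < j → j ≤ n → x j < x i := by
    intro i j hij hjn
    have hij' : (i:ℝ) < j := by exact_mod_cast hij
    have hjn' : (j:ℝ) ≤ n := by exact_mod_cast hjn
    have : Real.cos (j * Real.pi / n) < Real.cos (i * Real.pi / n) := by
      apply Real.cos_lt_cos_of_nonneg_of_le_pi
      · positivity
      · rw [div_le_iff₀ hn0]
        nlinarith
      · rw [div_lt_div_iff₀ hn0 hn0]
        nlinarith [mul_pos (mul_pos (sub_pos.2 hij') hpi) hn0]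
    simp only [hx]
    linarith
  have hxanti' : ∀ i j : ℕ, i ≤ j → j ≤ n → x j ≤ x i := by
    intro i j hij hjn
    rcases eq_or_lt_of_le hij with rfl | h
    · exact le_refl _
    · exact (hxanti i j h hjn).le
  -- the comparison polynomial
  set q : ℝ[X] := (Chebyshev.T ℝ n).comp (C 2⁻¹ * (X - C m)) with hq
  have hinner_deg : (C (2⁻¹:ℝ) * (X - C m)).natDegree = 1 := by
    rw [natDegree_C_mul (by norm_num), natDegree_X_sub_C]
  have hinner_lead : (C (2⁻¹:ℝ) * (X - C m)).leadingCoeff = 2⁻¹ := by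
    rw [leadingCoeff_mul, leadingCoeff_C, (monic_X_sub_C m).leadingCoeff, mul_one]
  have hqdeg : q.natDegree = n := by
    rw [hq, natDegree_comp, chebDeg n hn1, hinner_deg, mul_one]
  have hqlead : q.leadingCoeff = 2^(n-1) * (2⁻¹)^n := by
    rw [hq, leadingCoeff_comp (by rw [hinner_deg]; norm_num), chebLead n hn1, hinner_lead,
      chebDeg n hn1]
  have hqlead' : (C (2*c) * q).leadingCoeff = c := by
    rw [leadingCoeff_mul, leadingCoeff_C, hqlead]
    obtain ⟨k, hk⟩ : ∃ k, n = k + 1 := ⟨n - 1, by omega⟩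
    rw [hk]
    simp only [Nat.add_sub_cancel, pow_succ]
    have h2k : (2:ℝ)^k * (2⁻¹)^k = 1 := by
      rw [← mul_pow]; norm_num
    nlinarith
  have hp0 : p ≠ 0 := by
    intro h
    rw [h, leadingCoeff_zero] at hcdef
    rw [hcdef] at hc1
    norm_num at hc1
  have hcq0 : C (2*c) * q ≠ 0 := by
    intro h
    rw [h] at hqlead'
    simp only [leadingCoeff_zero] at hqlead'
    linarith
  have hdeg_eq : (C (2*c) * q).degree = p.degree := by
    rw [degree_eq_natDegree hcq0, degree_eq_natDegree hp0, hpdeg,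
      natDegree_C_mul (by linarith : (2*c:ℝ) ≠ 0), hqdeg]
  set D : ℝ[X] := C (2*c) * q - p with hD
  have hDdeg : D.natDegree < n := by
    have hdlt : D.degree < (n : ℕ) := by
      calc D.degree < (C (2*c) * q).degree := degree_sub_lt hdeg_eq hcq0 (by rw [hqlead', hcdef])
        _ = ((C (2*c) * q).natDegree : WithBot ℕ) := degree_eq_natDegree hcq0
        _ = (n : ℕ) := by rw [natDegree_C_mul (by linarith : (2*c:ℝ) ≠ 0), hqdeg]
    by_cases hD0 : D = 0
    · rw [hD0]; simpa using hn1
    · exact (natDegree_lt_iff_degree_lt hD0).2 hdlt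
  -- evaluation of q at the test points
  have hqeval : ∀ j : ℕ, j ≤ n → q.eval (x j) = (-1)^j := by
    intro j hjn
    have : q.eval (x j) = (Chebyshev.T ℝ n).eval (Real.cos (j * Real.pi / n)) := by
      rw [hq, eval_comp]
      congr 1
      simp only [hx, eval_mul, eval_sub, eval_C, eval_X]
      ring
    rw [this]
    have hTc := Polynomial.Chebyshev.T_real_cos (j * Real.pi / n) (n:ℤ)
    rw [hTc]
    push_cast
    rw [show (n:ℝ) * (j * Real.pi / n) = j * Real.pi by field_simp]
    have := Real.cos_nat_mul_pi_sub 0 j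
    simpa using this
  -- sign of D at the test points
  have hDpos : ∀ j : ℕ, j ≤ n → Even j → 0 < D.eval (x j) := by
    intro j hjn hev
    have habs := hlt (x j) (hxmem j)
    rw [abs_lt] at habs
    simp only [hD, eval_sub, eval_mul, eval_C, hqeval j hjn, hev.neg_one_pow]
    nlinarith [habs.1, habs.2]
  have hDneg : ∀ j : ℕ, j ≤ n → Odd j → D.eval (x j) < 0 := by
    intro j hjn hod
    have habs := hlt (x j) (hxmem j)
    rw [abs_lt] at habs
    simp only [hD, eval_sub, eval_mul, eval_C, hqeval j hjn, hod.neg_one_pow]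
    nlinarith [habs.1, habs.2]
  -- roots of D between consecutive test points
  have hroot : ∀ j : ℕ, j < n → ∃ y ∈ Set.Ioo (x (j+1)) (x j), D.eval y = 0 := by
    intro j hj
    have hle : x (j+1) ≤ x j := (hxanti j (j+1) (lt_add_one j) (by omega)).le
    have hcont : ContinuousOn (fun t => D.eval t) (Set.Icc (x (j+1)) (x j)) :=
      (Polynomial.continuous D).continuousOn
    rcases Nat.even_or_odd j with he | ho
    · obtain ⟨y, hy, hy0⟩ := intermediate_value_Ioo hle hcont
        (Set.mem_Ioo.2 ⟨hDneg _ (by omega) (Even.add_one he), hDpos _ (by omega) he⟩)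
      exact ⟨y, hy, hy0⟩
    · obtain ⟨y, hy, hy0⟩ := intermediate_value_Ioo' hle hcont
        (Set.mem_Ioo.2 ⟨hDneg _ (by omega) ho, hDpos _ (by omega) (Odd.add_one ho)⟩)
      exact ⟨y, hy, hy0⟩
  choose y hy hy0 using hroot
  set z : Fin n → ℝ := fun j => y j j.2 with hz
  have hzinj : Function.Injective z := by
    have key : ∀ i j : Fin n, (i:ℕ) < (j:ℕ) → z j < z i := by
      intro i j hij
      have h1 : z j < x (j:ℕ) := (hy j j.2).2
      have h2 : x ((i:ℕ)+1) < z i := (hy i i.2).1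
      have h3 : x (j:ℕ) ≤ x ((i:ℕ)+1) := hxanti' _ _ (by omega) (le_of_lt j.2)
      linarith
    intro i j hij
    by_contra hne
    have hne' : (i:ℕ) ≠ (j:ℕ) := fun h => hne (Fin.ext h)
    rcases lt_or_gt_of_ne hne' with h | h
    · exact absurd hij (ne_of_gt (key i j h))
    · exact absurd hij.symm (ne_of_gt (key j i h))
  have hD0 : D = 0 := by
    apply eq_zero_of_natDegree_lt_card_of_eval_eq_zero D hzinj
    · intro i; exact hy0 i i.2
    · simpa using hDdeg
  have := hDpos 0 (by omega) (Even.zero)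
  rw [hD0] at this
  simp at this

lemma supNorm_neg (a b : ℝ) (P : Polynomial ℤ) : supNorm a b (-P) = supNorm a b P := by
  unfold _root_.supNorm
  congr 1
  have : (fun x => |((-P).map (Int.castRingHom ℝ)).eval x|)
      = fun x => |(P.map (Int.castRingHom ℝ)).eval x| := by
    funext t
    rw [Polynomial.map_neg, eval_neg, abs_neg]
  rw [this]

theorem stmt14 (a b : ℝ) (hlen : 4 ≤ b - a) :
    (∀ P : Polynomial ℤ, P ≠ 0 → 1 ≤ supNorm a b P) ∧ intChebyshev a b = 1 := by
  have hab : a ≤ b := by linarith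
  have part1 : ∀ P : Polynomial ℤ, P ≠ 0 → 1 ≤ supNorm a b P := by
    intro P hP
    rcases lt_trichotomy P.leadingCoeff 0 with h | h | h
    · rw [← supNorm_neg]
      exact keyPos a b hlen (-P) (by simpa using h)
    · exact absurd (leadingCoeff_eq_zero.1 h) hP
    · exact keyPos a b hlen P h
  refine ⟨part1, ?_⟩
  have h1 : supNorm a b 1 = 1 := by
    unfold _root_.supNorm
    rw [Polynomial.map_one]
    have : (fun x : ℝ => |(1 : ℝ[X]).eval x|) '' Set.Icc a b = {1} := by
      have : (fun x : ℝ => |(1 : ℝ[X]).eval x|) = fun _ => (1:ℝ) := by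
        funext t; simp
      rw [this]
      exact Set.Nonempty.image_const (Set.nonempty_Icc.2 hab) 1
    rw [this, csSup_singleton]
  have hmem : ∀ m : ℕ, (1:ℝ) ∈ {r : ℝ | ∃ R : Polynomial ℤ, R ≠ 0 ∧ R.natDegree ≤ m ∧ r = supNorm a b R} :=
    fun m => ⟨1, one_ne_zero, by simp, h1.symm⟩
  have hs : ∀ m : ℕ, sInf {r : ℝ | ∃ R : Polynomial ℤ, R ≠ 0 ∧ R.natDegree ≤ m ∧ r = supNorm a b R} = 1 := by
    intro m
    apply le_antisymm
    · exact csInf_le ⟨1, fun r ⟨R, hR0, _, hr⟩ => hr ▸ part1 R hR0⟩ (hmem m)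
    · exact le_csInf ⟨1, hmem m⟩ (fun r ⟨R, hR0, _, hr⟩ => hr ▸ part1 R hR0)
  unfold intChebyshev
  simp only [hs, Real.one_rpow]
  exact limsup_const 1
end

section
/- Fix an integer m ≥ 1 and define φ: ℂ → ℝ by φ(z) = Re(z^m) if |z| ≤ 1; φ(z) = Re(z^m) · (m + 1 − m|z|) if 1 ≤ |z| ≤ 1 + 1/m; and φ(z) = 0 if |z| ≥ 1 + 1/m. Then φ is Lipschitz with constant 8m: for all z, t ∈ ℂ, |φ(z) − φ(t)| ≤ 8m |z − t|. -/
noncomputable def gg (m : ℕ) (r : ℝ) : ℝ := max 0 (min 1 ((m : ℝ) + 1 - m * r))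

lemma gg_nonneg (m : ℕ) (r : ℝ) : 0 ≤ gg m r := le_max_left _ _

lemma gg_le_one (m : ℕ) (r : ℝ) : gg m r ≤ 1 :=
  max_le zero_le_one (min_le_left _ _)

lemma gg_lip (m : ℕ) (a b : ℝ) : |gg m a - gg m b| ≤ m * |a - b| := by
  have h1 : |gg m a - gg m b| ≤ |min 1 ((m : ℝ) + 1 - m * a) - min 1 ((m : ℝ) + 1 - m * b)| := by
    unfold gg
    rw [max_comm 0 _, max_comm 0 _]
    exact abs_max_sub_max_le_abs _ _ _
  have h2 : |min 1 ((m : ℝ) + 1 - m * a) - min 1 ((m : ℝ) + 1 - m * b)| ≤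
      |((m : ℝ) + 1 - m * a) - ((m : ℝ) + 1 - m * b)| := by
    have := abs_min_sub_min_le_max (1 : ℝ) ((m : ℝ) + 1 - m * a) 1 ((m : ℝ) + 1 - m * b)
    simpa using this
  have h3 : |((m : ℝ) + 1 - m * a) - ((m : ℝ) + 1 - m * b)| = m * |a - b| := by
    rw [show ((m : ℝ) + 1 - m * a) - ((m : ℝ) + 1 - m * b) = (m : ℝ) * (b - a) by ring,
      abs_mul, Nat.abs_cast, abs_sub_comm]
  linarith

lemma phi_eq (m : ℕ) (hm : 1 ≤ m) (z : ℂ) :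
    (if ‖z‖ ≤ 1 then (z ^ m).re
      else if ‖z‖ ≤ 1 + 1 / (m : ℝ) then
        (z ^ m).re * ((m : ℝ) + 1 - (m : ℝ) * ‖z‖)
      else 0) = (z ^ m).re * gg m (‖z‖) := by
  have hm0 : (0 : ℝ) < m := by exact_mod_cast hm
  unfold gg
  split_ifs with h1 h2
  · have : (1 : ℝ) ≤ (m : ℝ) + 1 - m * ‖z‖ := by nlinarith
    rw [min_eq_left this, max_eq_right zero_le_one, mul_one]
  · have hge : (1 : ℝ) ≤ ‖z‖ := le_of_not_ge h1
    have hle1 : (m : ℝ) + 1 - m * ‖z‖ ≤ 1 := by nlinarith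
    have hge0 : (0 : ℝ) ≤ (m : ℝ) + 1 - m * ‖z‖ := by
      have : (m : ℝ) * ‖z‖ ≤ m * (1 + 1 / m) := by nlinarith
      rw [mul_add, mul_one_div, div_self hm0.ne'] at this
      linarith
    rw [min_eq_right hle1, max_eq_right hge0]
  · have hgt : 1 + 1 / (m : ℝ) < ‖z‖ := lt_of_not_ge h2
    have : (m : ℝ) + 1 - m * ‖z‖ < 0 := by
      have : (m : ℝ) * (1 + 1 / m) < m * ‖z‖ := by nlinarith
      rw [mul_add, mul_one_div, div_self hm0.ne'] at this
      linarith
    rw [min_eq_right (this.le.trans zero_le_one), max_eq_left this.le, mul_zero]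

lemma gg_zero (m : ℕ) (hm : 1 ≤ m) {r : ℝ} (h : 1 + 1 / (m : ℝ) ≤ r) : gg m r = 0 := by
  have hm0 : (0 : ℝ) < m := by exact_mod_cast hm
  have : (m : ℝ) + 1 - m * r ≤ 0 := by
    have : (m : ℝ) * (1 + 1 / m) ≤ m * r := by nlinarith
    rw [mul_add, mul_one_div, div_self hm0.ne'] at this
    linarith
  unfold gg
  rw [min_eq_right (this.trans zero_le_one), max_eq_left this]

lemma bound3 (m : ℕ) (hm : 1 ≤ m) : (1 + 1 / (m : ℝ)) ^ m ≤ 3 := by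
  have hm0 : (0 : ℝ) < m := by exact_mod_cast hm
  have h1 : (1 + 1 / (m : ℝ)) ≤ Real.exp (1 / m) := by
    have := Real.add_one_le_exp (1 / (m : ℝ)); linarith
  have h2 : (1 + 1 / (m : ℝ)) ^ m ≤ Real.exp (1 / m) ^ m := by
    apply pow_le_pow_left₀ (by positivity) h1
  have h3 : Real.exp (1 / (m : ℝ)) ^ m = Real.exp 1 := by
    rw [← Real.exp_nat_mul, mul_one_div, div_self hm0.ne']
  rw [h3] at h2
  have := Real.exp_one_lt_d9
  linarith

lemma pow_lip (m : ℕ) (z t : ℂ) (R : ℝ) (hz : ‖z‖ ≤ R) (ht : ‖t‖ ≤ R)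
    (hR : 1 ≤ R) : ‖z ^ m - t ^ m‖ ≤ m * R ^ m * ‖z - t‖ := by
  rw [← geom_sum₂_mul, norm_mul]
  apply mul_le_mul_of_nonneg_right _ (norm_nonneg _)
  calc ‖∑ i ∈ Finset.range m, z ^ i * t ^ (m - 1 - i)‖
      ≤ ∑ i ∈ Finset.range m, ‖z ^ i * t ^ (m - 1 - i)‖ := by
        exact norm_sum_le _ _
    _ ≤ ∑ i ∈ Finset.range m, R ^ m := by
        apply Finset.sum_le_sum
        intro i hi
        rw [norm_mul, norm_pow, norm_pow]
        have h1 : ‖z‖ ^ i * ‖t‖ ^ (m - 1 - i) ≤ R ^ i * R ^ (m - 1 - i) := by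
          apply mul_le_mul (pow_le_pow_left₀ (norm_nonneg _) hz i)
            (pow_le_pow_left₀ (norm_nonneg _) ht _) (by positivity) (by positivity)
        refine h1.trans ?_
        rw [← pow_add]
        apply pow_le_pow_right₀ hR
        have := Finset.mem_range.mp hi
        omega
    _ = m * R ^ m := by rw [Finset.sum_const, Finset.card_range, nsmul_eq_mul]

theorem stmt17 (m : ℕ) (hm : 1 ≤ m) :
    ∀ z t : ℂ,
      |(if ‖z‖ ≤ 1 then (z ^ m).re
        else if ‖z‖ ≤ 1 + 1 / (m : ℝ) then
          (z ^ m).re * ((m : ℝ) + 1 - (m : ℝ) * ‖z‖)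
        else 0) -
       (if ‖t‖ ≤ 1 then (t ^ m).re
        else if ‖t‖ ≤ 1 + 1 / (m : ℝ) then
          (t ^ m).re * ((m : ℝ) + 1 - (m : ℝ) * ‖t‖)
        else 0)| ≤ 8 * (m : ℝ) * ‖z - t‖ := by
  have hm0 : (0 : ℝ) < m := by exact_mod_cast hm
  -- key lemma assuming |z| ≤ |t|
  have key : ∀ z t : ℂ, ‖z‖ ≤ ‖t‖ →
      |(z ^ m).re * gg m (‖z‖) - (t ^ m).re * gg m (‖t‖)|
        ≤ 8 * (m : ℝ) * ‖z - t‖ := by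
    intro z t hzt
    by_cases hz : 1 + 1 / (m : ℝ) ≤ ‖z‖
    · rw [gg_zero m hm hz, gg_zero m hm (hz.trans hzt), mul_zero, mul_zero, sub_zero, abs_zero]
      positivity
    push_neg at hz
    have hzR : ‖z‖ ≤ 1 + 1 / (m : ℝ) := hz.le
    have habs : ∀ a b : ℂ, |‖a‖ - ‖b‖| ≤ ‖a - b‖ :=
      fun a b => abs_norm_sub_norm_le a b
    -- decomposition
    have hd : |(z ^ m).re * gg m (‖z‖) - (t ^ m).re * gg m (‖t‖)|
        ≤ |(z ^ m).re| * |gg m (‖z‖) - gg m (‖t‖)|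
          + |(z ^ m).re - (t ^ m).re| * gg m (‖t‖) := by
      have : (z ^ m).re * gg m (‖z‖) - (t ^ m).re * gg m (‖t‖)
          = (z ^ m).re * (gg m (‖z‖) - gg m (‖t‖))
            + ((z ^ m).re - (t ^ m).re) * gg m (‖t‖) := by ring
      rw [this]
      refine (abs_add_le _ _).trans ?_
      rw [abs_mul, abs_mul, abs_of_nonneg (gg_nonneg m _)]
    refine hd.trans ?_
    -- bound term 1
    have h1a : |(z ^ m).re| ≤ 3 := by
      have := Complex.abs_re_le_norm (z ^ m)
      have h2 : ‖z ^ m‖ ≤ (1 + 1 / (m : ℝ)) ^ m := by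
        rw [norm_pow]
        exact pow_le_pow_left₀ (norm_nonneg _) hzR m
      have := bound3 m hm
      linarith
    have h1b : |gg m (‖z‖) - gg m (‖t‖)| ≤ m * ‖z - t‖ :=
      (gg_lip m _ _).trans (mul_le_mul_of_nonneg_left (habs z t) hm0.le)
    have ht1 : |(z ^ m).re| * |gg m (‖z‖) - gg m (‖t‖)|
        ≤ 3 * (m * ‖z - t‖) :=
      mul_le_mul h1a h1b (abs_nonneg _) (by norm_num)
    -- bound term 2
    have ht2 : |(z ^ m).re - (t ^ m).re| * gg m (‖t‖)
        ≤ 3 * (m * ‖z - t‖) := by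
      by_cases hgt : gg m (‖t‖) = 0
      · rw [hgt, mul_zero]; positivity
      · have htR : ‖t‖ ≤ 1 + 1 / (m : ℝ) := by
          by_contra hcon
          exact hgt (gg_zero m hm (le_of_not_ge hcon))
        have h2a : |(z ^ m).re - (t ^ m).re| ≤ ‖z ^ m - t ^ m‖ := by
          rw [← Complex.sub_re]
          exact Complex.abs_re_le_norm _
        have h2b : ‖z ^ m - t ^ m‖
            ≤ m * (1 + 1 / (m : ℝ)) ^ m * ‖z - t‖ := by
          apply pow_lip m z t _ hzR htR
          have : 0 < 1 / (m : ℝ) := by positivity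
          linarith
        have h2c : (m : ℝ) * (1 + 1 / (m : ℝ)) ^ m * ‖z - t‖
            ≤ m * 3 * ‖z - t‖ := by
          apply mul_le_mul_of_nonneg_right _ (norm_nonneg _)
          exact mul_le_mul_of_nonneg_left (bound3 m hm) hm0.le
        calc |(z ^ m).re - (t ^ m).re| * gg m (‖t‖)
            ≤ |(z ^ m).re - (t ^ m).re| * 1 :=
              mul_le_mul_of_nonneg_left (gg_le_one m _) (abs_nonneg _)
          _ = |(z ^ m).re - (t ^ m).re| := mul_one _
          _ ≤ m * 3 * ‖z - t‖ := h2a.trans (h2b.trans h2c)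
          _ = 3 * (m * ‖z - t‖) := by ring
    have hC : (0:ℝ) ≤ m * ‖z - t‖ := by positivity
    linarith
  intro z t
  rw [phi_eq m hm z, phi_eq m hm t]
  rcases le_total (‖z‖) (‖t‖) with h | h
  · exact key z t h
  · rw [abs_sub_comm, ← norm_neg (z - t)]
    simpa using key t z h
end
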